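/- arXiv:1711.08625 — 7 statements merged into one kernel-verified Lean document; each statement's English description precedes it below -/
import Mathlib

section
/- Let n ≥ 3 be an integer and M a finite group of order 3·2^n such that every normal subgroup of M of odd order is trivial and a Sylow 2-subgroup P of M is not normal in M (equivalently, M has 2-length 2 and O_{2'}(M) = 1). Let G = Park(M,P) be Park's group and ι : M → G Park's embedding, and let k be an algebraically closed field of characteristic 2. Then for every subgroup Q of P, the permutation k-module on the left coset space (ι(Q)·C_G(ι(Q))) / (ι(Q)·C_{ι(M)}(ι(Q))) is an indecomposable module for the group ι(Q)·C_G(ι(Q)). -/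
/-- A module is indecomposable if it is nonzero and is not the direct sum of
two nonzero submodules. -/
def IsIndecomposableModule (R : Type*) (M : Type*) [Semiring R] [AddCommMonoid M]
    [Module R M] : Prop :=
  Nontrivial M ∧ ∀ U W : Submodule R M, IsCompl U W → U = ⊥ ∨ W = ⊥

/-- The permutation `kG`-module `k[X]` on a `G`-set `X`, as a module over the
group algebra `MonoidAlgebra k G`. -/
abbrev PermutationModule (k G X : Type*) [CommSemiring k] [Monoid G] [MulAction G X] :=
  (Representation.ofMulAction k G X).asModule

/-- Park's group `Park(M, P)`: the group of bijections of `M` commuting with the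
right multiplication action of `P`. -/
def parkGroup (M : Type*) [Group M] (P : Subgroup M) : Subgroup (Equiv.Perm M) where
  carrier := {f : Equiv.Perm M | ∀ (m u : M), u ∈ P → f (m * u) = f m * u}
  one_mem' := by intro m u _; rfl
  mul_mem' := by
    intro f g hf hg m u hu
    simp only [Equiv.Perm.mul_apply]
    rw [hg m u hu, hf _ u hu]
  inv_mem' := by
    intro f hf m u hu
    apply f.injective
    rw [Equiv.Perm.coe_inv, Equiv.apply_symm_apply, hf _ u hu, Equiv.apply_symm_apply]

/-- Park's embedding of `M` into `Park(M, P)`, sending `m` to left translation by `m`. -/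
def parkEmbed (M : Type*) [Group M] (P : Subgroup M) : M →* ↥(parkGroup M P) where
  toFun m := ⟨Equiv.mulLeft m, fun x u _ => by simp [mul_assoc]⟩
  map_one' := by
    apply Subtype.ext
    ext x
    simp
  map_mul' m n := by
    apply Subtype.ext
    ext x
    simp [mul_assoc]

/-- The subgroup `ι(Q)·C_G(ι(Q))` of Park's group `G = Park(M, P)`; since `ι(Q)`
normalizes the centralizer `C_G(ι(Q))`, this product of subgroups is their join. -/
def qcG (M : Type*) [Group M] (P Q : Subgroup M) : Subgroup ↥(parkGroup M P) :=
  Q.map (parkEmbed M P) ⊔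
    Subgroup.centralizer (Q.map (parkEmbed M P) : Set ↥(parkGroup M P))

/-- The subgroup `ι(Q)·C_{ι(M)}(ι(Q))` of Park's group `G = Park(M, P)`, where
`C_{ι(M)}(ι(Q)) = ι(M) ⊓ C_G(ι(Q))`; again the product is the join. -/
def qcM (M : Type*) [Group M] (P Q : Subgroup M) : Subgroup ↥(parkGroup M P) :=
  Q.map (parkEmbed M P) ⊔
    ((parkEmbed M P).range ⊓
      Subgroup.centralizer (Q.map (parkEmbed M P) : Set ↥(parkGroup M P)))

/-- `P` is a Sylow `p`-subgroup of a subgroup `H` of `G`. -/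
def IsSylowIn (p : ℕ) {G : Type*} [Group G] (H P : Subgroup G) : Prop :=
  P ≤ H ∧ IsPGroup p P ∧ ∀ Q : Subgroup G, Q ≤ H → IsPGroup p Q → P ≤ Q → Q = P

set_option synthInstance.maxHeartbeats 1000000
set_option maxHeartbeats 1000000

set_option linter.unusedSectionVars false
set_option linter.unusedVariables false

open Representation

section PartI

variable {k G X : Type*} [Field k] [Group G] [MulAction G X] {p : ℕ} [Fact p.Prime] [CharP k p]

/-- Any nonzero submodule of the permutation module contains a nonzero vector fixed by a
finite `p`-subgroup `S`. -/
lemma exists_fixed_vector (S : Subgroup G) [Finite ↥S] (hS : IsPGroup p ↥S)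
    (U : Submodule (MonoidAlgebra k G) (Representation.ofMulAction k G X).asModule)
    (hU : U ≠ ⊥) :
    ∃ v : MonoidAlgebra k X, v ≠ 0 ∧ (Representation.ofMulAction k G X).asModuleEquiv.symm v ∈ U ∧
      ∀ s ∈ S, Representation.ofMulAction k G X s v = v := by
  classical
  obtain ⟨u0, hu0U, hu0⟩ := Submodule.exists_mem_ne_zero_of_ne_bot hU
  letI : Algebra (ZMod p) k := ZMod.algebra k p
  have e := (Representation.ofMulAction k G X).asModuleEquiv
  let u : MonoidAlgebra k X := (Representation.ofMulAction k G X).asModuleEquiv u0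
  have hune : u ≠ 0 := by
    intro h
    exact hu0 (by simpa [u] using congrArg (Representation.ofMulAction k G X).asModuleEquiv.symm h)
  let D : Set (MonoidAlgebra k X) := Set.range (fun s : ↥S => Representation.ofMulAction k G X ↑s u)
  have hDfin : D.Finite := Set.finite_range _
  let W : Submodule (ZMod p) (MonoidAlgebra k X) := Submodule.span (ZMod p) D
  haveI : Module.Finite (ZMod p) ↥W := Module.Finite.span_of_finite _ hDfin
  haveI : Finite ↥W := Module.finite_of_finite (ZMod p)
  have hclosed : ∀ (s : ↥S) (w : MonoidAlgebra k X), w ∈ W → Representation.ofMulAction k G X ↑s w ∈ W := by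
    intro s w hw
    have hmap : Submodule.map ((Representation.ofMulAction k G X ↑s).restrictScalars (ZMod p)) W
        ≤ W := by
      rw [Submodule.map_span]
      apply Submodule.span_mono
      rintro _ ⟨_, ⟨t, rfl⟩, rfl⟩
      refine ⟨s * t, ?_⟩
      simp [map_mul]
    exact hmap ⟨w, hw, rfl⟩
  letI smulSW : SMul ↥S ↥W := ⟨fun s w => ⟨Representation.ofMulAction k G X ↑s ↑w,
    hclosed s ↑w w.2⟩⟩
  have hsmul_def : ∀ (s : ↥S) (w : ↥W),
      ((s • w : ↥W) : MonoidAlgebra k X) = Representation.ofMulAction k G X ↑s ↑w := fun _ _ => rfl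
  letI act : MulAction ↥S ↥W :=
    { one_smul := fun w => by
        apply Subtype.ext
        rw [hsmul_def]
        simp
      mul_smul := fun s t w => by
        apply Subtype.ext
        rw [hsmul_def, hsmul_def, hsmul_def]
        simp [map_mul] }
  have huW : u ∈ W := Submodule.subset_span ⟨1, by simp⟩
  have hpW : p ∣ Nat.card ↥W := by
    have hps : p • (⟨u, huW⟩ : ↥W) = 0 := by
      have h := Nat.cast_smul_eq_nsmul (ZMod p) p (⟨u, huW⟩ : ↥W)
      rw [← h, ZMod.natCast_self, zero_smul]
    have hdvd : addOrderOf (⟨u, huW⟩ : ↥W) ∣ p := addOrderOf_dvd_of_nsmul_eq_zero hps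
    rcases (Nat.dvd_prime (Fact.out : p.Prime)).mp hdvd with h | h
    · exfalso
      rw [AddMonoid.addOrderOf_eq_one_iff] at h
      exact hune (by simpa [Subtype.ext_iff] using h)
    · have := addOrderOf_dvd_natCard (⟨u, huW⟩ : ↥W)
      rwa [h] at this
  have hmod := IsPGroup.card_modEq_card_fixedPoints hS (↥W)
  have hfix0 : (0 : ↥W) ∈ MulAction.fixedPoints ↥S ↥W := by
    intro s
    apply Subtype.ext
    rw [hsmul_def]
    simp
  have hpfix : p ∣ Nat.card ↥(MulAction.fixedPoints ↥S ↥W) :=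
    (Nat.modEq_zero_iff_dvd).mp ((Nat.modEq_zero_iff_dvd.mpr hpW).symm.trans hmod).symm
  haveI : Nonempty ↥(MulAction.fixedPoints ↥S ↥W) := ⟨⟨0, hfix0⟩⟩
  haveI : Nontrivial ↥(MulAction.fixedPoints ↥S ↥W) := by
    apply Finite.one_lt_card_iff_nontrivial.mp
    have h0 : 0 < Nat.card ↥(MulAction.fixedPoints ↥S ↥W) := Nat.card_pos
    have h2 := Nat.le_of_dvd h0 hpfix
    have := (Fact.out : p.Prime).two_le
    omega
  obtain ⟨y, hy⟩ := exists_ne (⟨⟨0, Submodule.zero_mem W⟩, hfix0⟩ :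
    ↥(MulAction.fixedPoints ↥S ↥W))
  refine ⟨↑(↑y : ↥W), ?_, ?_, ?_⟩
  · intro h
    exact hy (by apply Subtype.ext; apply Subtype.ext; exact h)
  · have hWU : ∀ x ∈ W, (Representation.ofMulAction k G X).asModuleEquiv.symm x ∈ U := by
      intro x hx
      refine Submodule.span_induction ?_ ?_ ?_ ?_ hx
      · rintro _ ⟨s, rfl⟩
        have heq : (Representation.ofMulAction k G X).asModuleEquiv.symm
            (Representation.ofMulAction k G X ↑s u) = MonoidAlgebra.of k G ↑s • u0 := by
          rw [Representation.asModuleEquiv_symm_map_rho]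
          simp only [u, LinearEquiv.symm_apply_apply]
        rw [heq]
        exact Submodule.smul_mem U _ hu0U
      · simp
      · intro a b _ _ ha hb
        rw [map_add]
        exact Submodule.add_mem U ha hb
      · intro c a _ ha
        have h1 : (c : ZMod p) • a = (algebraMap (ZMod p) k c) • a := (algebraMap_smul k c a).symm
        rw [h1, Representation.asModuleEquiv_symm_map_smul]
        exact Submodule.smul_mem U _ ha
    exact hWU _ (↑y : ↥W).2
  · intro s hs
    have h := congrArg Subtype.val (y.2 ⟨s, hs⟩)
    rw [hsmul_def] at h
    exact h

lemma indec_of_transitive (S : Subgroup G) [Finite ↥S] (hS : IsPGroup p ↥S) [Nonempty X]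
    (x₀ : X) (htrans : ∀ x : X, ∃ s ∈ S, s • x₀ = x) :
    (Nontrivial ((Representation.ofMulAction k G X).asModule) ∧
      ∀ U W : Submodule (MonoidAlgebra k G) ((Representation.ofMulAction k G X).asModule),
        IsCompl U W → U = ⊥ ∨ W = ⊥) := by
  classical
  constructor
  · have : Nontrivial (MonoidAlgebra k X) := by
      obtain ⟨x⟩ := ‹Nonempty X›
      exact ⟨MonoidAlgebra.single x 1, 0, by simp⟩
    exact ((Representation.ofMulAction k G X).asModuleEquiv.toEquiv).nontrivial
  · intro U W hcompl
    by_contra hcon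
    push_neg at hcon
    obtain ⟨hUne, hWne⟩ := hcon
    obtain ⟨u, hune, huU, hufix⟩ := exists_fixed_vector S hS U hUne
    obtain ⟨w, hwne, hwW, hwfix⟩ := exists_fixed_vector S hS W hWne
    -- fixed vectors are constant on X
    have hconst : ∀ v : MonoidAlgebra k X, (∀ s ∈ S, Representation.ofMulAction k G X s v = v) →
        ∀ x : X, v.coeff x = v.coeff x₀ := by
      intro v hv x
      obtain ⟨s, hs, rfl⟩ := htrans x
      have h1 : (Representation.ofMulAction k G X s v).coeff (s • x₀) = v.coeff x₀ := by
        rw [Representation.ofMulAction_apply]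
        simp
      rw [hv s hs] at h1
      exact h1
    have hux₀ : u.coeff x₀ ≠ 0 := by
      intro h
      apply hune
      ext x
      rw [hconst u hufix x, h]
      rfl
    set d : k := w.coeff x₀ * (u.coeff x₀)⁻¹ with hd
    have hwd : w = d • u := by
      ext x
      rw [MonoidAlgebra.coeff_smul_apply, smul_eq_mul, hconst u hufix x, hconst w hwfix x, hd]
      field_simp
    have hmem : (Representation.ofMulAction k G X).asModuleEquiv.symm w ∈ U := by
      rw [hwd, Representation.asModuleEquiv_symm_map_smul]
      exact Submodule.smul_mem U _ huU
    have hbot : (Representation.ofMulAction k G X).asModuleEquiv.symm w ∈ (⊥ :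
        Submodule (MonoidAlgebra k G) ((Representation.ofMulAction k G X).asModule)) := by
      rw [← hcompl.inf_eq_bot]
      exact ⟨hmem, hwW⟩
    rw [Submodule.mem_bot] at hbot
    apply hwne
    simpa using congrArg (Representation.ofMulAction k G X).asModuleEquiv hbot

end PartI

namespace ParkAux

variable {M : Type*} [Group M] {P : Subgroup M}



/-- The defining property of elements of Park's group. -/
lemma park_apply (g : ↥(parkGroup M P)) (m u : M) (hu : u ∈ P) :
    (g : Equiv.Perm M) (m * u) = (g : Equiv.Perm M) m * u :=
  g.2 m u hu

lemma park_pow_apply (g : ↥(parkGroup M P)) (j : ℕ) (m : M) :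
    ((g ^ j : ↥(parkGroup M P)) : Equiv.Perm M) m
      = ((g : Equiv.Perm M) ^ j) m := by
  norm_cast

lemma perm_pow_succ_apply (σ : Equiv.Perm M) (j : ℕ) (m : M) :
    (σ ^ (j + 1)) m = σ ((σ ^ j) m) := by
  rw [pow_succ']
  rfl

/-- The key iteration formula: if `g` maps `m` into its own coset, with
`b = m⁻¹ * g m`, then `g^j m = m * b^j`. -/
lemma park_iterate (g : ↥(parkGroup M P)) (m : M)
    (hm : m⁻¹ * (g : Equiv.Perm M) m ∈ P) (j : ℕ) :
    ((g : Equiv.Perm M) ^ j) m = m * (m⁻¹ * (g : Equiv.Perm M) m) ^ j := by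
  induction j with
  | zero => simp
  | succ j ih =>
    have hbj : (m⁻¹ * (g : Equiv.Perm M) m) ^ j ∈ P := pow_mem hm j
    rw [perm_pow_succ_apply, ih, park_apply g m _ hbj, pow_succ', ← mul_assoc,
      mul_inv_cancel_left]

/-- If `g ∈ Park(M,P)` has odd exponent and maps `m` into its own `P`-coset
(`P` being a 2-group), then it fixes `m`. -/
lemma fix_of_mem_coset (hP2 : IsPGroup 2 ↥P) (g : ↥(parkGroup M P)) {r : ℕ} (hr : Odd r)
    (hgr : g ^ r = 1) (m : M) (hm : m⁻¹ * (g : Equiv.Perm M) m ∈ P) :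
    (g : Equiv.Perm M) m = m := by
  set b : M := m⁻¹ * (g : Equiv.Perm M) m with hb
  have hbr : m * b ^ r = m := by
    have h1 := park_iterate g m hm r
    rw [← park_pow_apply, hgr] at h1
    simpa using h1.symm
  have hbr1 : b ^ r = 1 := by
    exact mul_left_cancel (a := m) (by rw [hbr, mul_one])
  obtain ⟨K, hK⟩ := hP2 ⟨b, hm⟩
  have hb2 : b ^ (2 ^ K) = 1 := by
    have := congrArg (Subtype.val) hK
    simpa using this
  have hcop : Nat.Coprime r (2 ^ K) :=
    Nat.Coprime.pow_right _ (Odd.coprime_two_right hr)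
  have hord : orderOf b ∣ Nat.gcd r (2 ^ K) :=
    Nat.dvd_gcd (orderOf_dvd_of_pow_eq_one hbr1) (orderOf_dvd_of_pow_eq_one hb2)
  rw [Nat.Coprime.gcd_eq_one hcop, Nat.dvd_one, orderOf_eq_one_iff] at hord
  have : b = 1 := hord
  have h2 : m⁻¹ * (g : Equiv.Perm M) m = 1 := by rw [← hb, this]
  calc (g : Equiv.Perm M) m = m * (m⁻¹ * (g : Equiv.Perm M) m) :=
        (mul_inv_cancel_left m _).symm
  _ = m := by rw [h2, mul_one]

/-- Coset injectivity. -/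
lemma coset_inj (g : ↥(parkGroup M P)) {x y : M}
    (h : ((g : Equiv.Perm M) x)⁻¹ * (g : Equiv.Perm M) y ∈ P) : x⁻¹ * y ∈ P := by
  set u : M := ((g : Equiv.Perm M) x)⁻¹ * (g : Equiv.Perm M) y with hu
  have h1 : (g : Equiv.Perm M) y = (g : Equiv.Perm M) x * u := by
    rw [hu, mul_inv_cancel_left]
  rw [← park_apply g x _ h] at h1
  have h2 : y = x * u := (g : Equiv.Perm M).injective h1
  rw [h2, inv_mul_cancel_left]
  exact h

variable {M : Type*} [Group M] {P : Subgroup M}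

lemma four_distinct {α : Type*} [Finite α] (hcard : Nat.card α ≤ 3) {a b c d : α}
    (hab : a ≠ b) (hac : a ≠ c) (had : a ≠ d) (hbc : b ≠ c) (hbd : b ≠ d) (hcd : c ≠ d) :
    False := by
  classical
  letI : Fintype α := Fintype.ofFinite α
  have h4 : ({a, b, c, d} : Finset α).card = 4 := by
    rw [Finset.card_insert_of_notMem (by simp [hab, hac, had]),
      Finset.card_insert_of_notMem (by simp [hbc, hbd]),
      Finset.card_insert_of_notMem (by simp [hcd]), Finset.card_singleton]
  have h5 := Finset.card_le_univ ({a, b, c, d} : Finset α)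
  rw [h4] at h5
  rw [Nat.card_eq_fintype_card] at hcard
  omega

/-- A fixed point of a permutation is fixed by its powers. -/
lemma fix_pow {α : Type*} (σ : Equiv.Perm α) (x : α) (hx : σ x = x) (e : ℕ) :
    (σ ^ e) x = x := by
  induction e with
  | zero => rfl
  | succ e ih => rw [pow_succ, Equiv.Perm.mul_apply, hx, ih]

/-- If `g` has odd prime order `ℓ`, `g^d` maps `m'` into its own coset with `ℓ ∤ d`,
and `g` moves `m'`, we get a contradiction. -/
lemma claimA (hP2 : IsPGroup 2 ↥P) (g : ↥(parkGroup M P)) {ℓ : ℕ} (hℓ : ℓ.Prime)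
    (hodd : Odd ℓ) (hord : orderOf g = ℓ) (m' : M) (hm' : (g : Equiv.Perm M) m' ≠ m')
    {d : ℕ} (hd : ¬ ℓ ∣ d)
    (hco : m'⁻¹ * (((g : Equiv.Perm M)) ^ d) m' ∈ P) : False := by
  have hgl : g ^ ℓ = 1 := by rw [← hord]; exact pow_orderOf_eq_one g
  -- g^d fixes m'
  have hfix : (((g : Equiv.Perm M)) ^ d) m' = m' := by
    have h1 : (g ^ d) ^ ℓ = 1 := by
      rw [← pow_mul, mul_comm, pow_mul, hgl, one_pow]
    have h2 : m'⁻¹ * ((g ^ d : ↥(parkGroup M P)) : Equiv.Perm M) m' ∈ P := by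
      rw [park_pow_apply]; exact hco
    have := fix_of_mem_coset hP2 (g ^ d) hodd h1 m' h2
    rw [park_pow_apply] at this
    exact this
  -- Bezout: d * e ≡ 1 mod ℓ
  have hcop : Nat.Coprime d ℓ := ((Nat.Prime.coprime_iff_not_dvd hℓ).mpr hd).symm
  obtain ⟨e, -, he⟩ := Nat.exists_mul_mod_eq_one_of_coprime hcop
    (lt_of_lt_of_le one_lt_two hℓ.two_le)
  have hde : d * e = ℓ * (d * e / ℓ) + 1 := by
    conv_lhs => rw [← Nat.div_add_mod (d * e) ℓ]
    rw [he]
  have hg1 : (g : Equiv.Perm M) m' = m' := by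
    have h3 : g ^ (d * e) = g := by
      rw [hde, pow_add, pow_mul, hgl, one_pow, one_mul, pow_one]
    have h4 : (((g : Equiv.Perm M)) ^ (d * e)) m' = m' := by
      rw [pow_mul]
      exact fix_pow _ _ hfix e
    rw [← park_pow_apply, h3] at h4
    exact h4
  exact hm' hg1

variable {M : Type*} [Group M] {P : Subgroup M}

lemma no_fixed_coset (hP2 : IsPGroup 2 ↥P) (hcard3 : Nat.card (M ⧸ P) = 3)
    (g : ↥(parkGroup M P)) {ℓ : ℕ} (hℓ : ℓ.Prime) (hodd : Odd ℓ) (hord : orderOf g = ℓ) :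
    ℓ = 3 ∧ ∀ m : M, m⁻¹ * (g : Equiv.Perm M) m ∉ P := by
  haveI : Finite (M ⧸ P) := Nat.finite_of_card_ne_zero (by rw [hcard3]; norm_num)
  have hgl : g ^ ℓ = 1 := by rw [← hord]; exact pow_orderOf_eq_one g
  have hgne : g ≠ 1 := by
    intro h
    rw [h, orderOf_one] at hord
    exact hℓ.one_lt.ne' hord.symm
  -- a moved point
  have hmoved : ∃ m' : M, (g : Equiv.Perm M) m' ≠ m' := by
    by_contra hcon
    push_neg at hcon
    exact hgne (Subtype.ext (Equiv.ext hcon))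
  obtain ⟨m', hm'⟩ := hmoved
  -- the coset orbit function
  set c : ℕ → M ⧸ P := fun i => (QuotientGroup.mk ((((g : Equiv.Perm M)) ^ i) m') : M ⧸ P)
    with hc
  have hne : ∀ i d : ℕ, ¬ ℓ ∣ d → c i ≠ c (i + d) := by
    intro i d hd heq
    rw [hc] at heq
    simp only [] at heq
    rw [QuotientGroup.eq] at heq
    -- rewrite g^(i+d) m' = g^i (g^d m')
    have hsplit : (((g : Equiv.Perm M)) ^ (i + d)) m' =
        (((g : Equiv.Perm M)) ^ i) ((((g : Equiv.Perm M)) ^ d) m') := by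
      rw [pow_add]
      rfl
    rw [hsplit] at heq
    have heq2 : (((g ^ i : ↥(parkGroup M P)) : Equiv.Perm M) m')⁻¹ *
        ((g ^ i : ↥(parkGroup M P)) : Equiv.Perm M) ((((g : Equiv.Perm M)) ^ d) m') ∈ P := by
      rw [park_pow_apply, park_pow_apply]
      exact heq
    have h3 := coset_inj (g ^ i) heq2
    exact claimA hP2 g hℓ hodd hord m' hm' hd h3
  have hndvd : ∀ d : ℕ, 0 < d → d < ℓ → ¬ ℓ ∣ d := by
    intro d h0 hdl hdvd
    exact absurd (Nat.le_of_dvd h0 hdvd) (by omega)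
  have hl3 : ℓ = 3 := by
    by_contra hne3
    have h5 : 5 ≤ ℓ := by
      obtain ⟨t, ht⟩ := hodd
      have h2 := hℓ.two_le
      omega
    refine four_distinct (le_of_eq hcard3) (a := c 0) (b := c 1) (c := c 2) (d := c 3)
      ?_ ?_ ?_ ?_ ?_ ?_
    · exact hne 0 1 (hndvd 1 (by norm_num) (by omega))
    · exact hne 0 2 (hndvd 2 (by norm_num) (by omega))
    · exact hne 0 3 (hndvd 3 (by norm_num) (by omega))
    · exact hne 1 1 (hndvd 1 (by norm_num) (by omega))
    · exact hne 1 2 (hndvd 2 (by norm_num) (by omega))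
    · exact hne 2 1 (hndvd 1 (by norm_num) (by omega))
  subst hl3
  refine ⟨rfl, ?_⟩
  intro m hmem
  have hfixm : (g : Equiv.Perm M) m = m :=
    fix_of_mem_coset hP2 g hodd hgl m hmem
  -- the coset of m is fixed pointwise, and differs from the moved cosets
  have hmc : ∀ i : ℕ, (QuotientGroup.mk m : M ⧸ P) ≠ c i := by
    intro i heq
    rw [hc] at heq
    simp only [] at heq
    rw [QuotientGroup.eq] at heq
    -- g^i m' = m * u with u ∈ P
    set u : M := m⁻¹ * (((g : Equiv.Perm M)) ^ i) m' with hu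
    have h1 : (((g : Equiv.Perm M)) ^ i) m' = m * u := by rw [hu, mul_inv_cancel_left]
    have h2 : (g : Equiv.Perm M) ((((g : Equiv.Perm M)) ^ i) m') = (((g : Equiv.Perm M)) ^ i) m' := by
      rw [h1, park_apply g m u heq, hfixm]
    have h3 : (((g : Equiv.Perm M)) ^ i) ((g : Equiv.Perm M) m') =
        (((g : Equiv.Perm M)) ^ i) m' := by
      calc (((g : Equiv.Perm M)) ^ i) ((g : Equiv.Perm M) m')
          = (((g : Equiv.Perm M)) ^ i * (g : Equiv.Perm M)) m' := rfl
        _ = (((g : Equiv.Perm M)) ^ (i + 1)) m' := by rw [pow_succ]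
        _ = (g : Equiv.Perm M) ((((g : Equiv.Perm M)) ^ i) m') := by
            rw [perm_pow_succ_apply]
        _ = (((g : Equiv.Perm M)) ^ i) m' := h2
    exact hm' (((g : Equiv.Perm M) ^ i).injective h3)
  refine four_distinct (le_of_eq hcard3) (a := (QuotientGroup.mk m : M ⧸ P))
    (b := c 0) (c := c 1) (d := c 2) (hmc 0) (hmc 1) (hmc 2) ?_ ?_ ?_
  · exact hne 0 1 (hndvd 1 (by norm_num) (by omega))
  · exact hne 0 2 (hndvd 2 (by norm_num) (by omega))
  · exact hne 1 1 (hndvd 1 (by norm_num) (by omega))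

variable {M : Type*} [Group M] {P : Subgroup M}

/-- The map on left cosets induced by an element of Park's group. -/
def cosetMapFun (g : ↥(parkGroup M P)) : M ⧸ P → M ⧸ P :=
  Quotient.map' (fun m => (g : Equiv.Perm M) m) (by
    intro x y hxy
    rw [QuotientGroup.leftRel_apply] at hxy ⊢
    have h1 : y = x * (x⁻¹ * y) := by rw [mul_inv_cancel_left]
    have h2 : (g : Equiv.Perm M) y = (g : Equiv.Perm M) x * (x⁻¹ * y) := by
      conv_lhs => rw [h1]
      exact park_apply g x _ hxy
    show ((g : Equiv.Perm M) x)⁻¹ * (g : Equiv.Perm M) y ∈ P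
    rw [h2, inv_mul_cancel_left]
    exact hxy)

lemma cosetMapFun_mk (g : ↥(parkGroup M P)) (m : M) :
    cosetMapFun g (QuotientGroup.mk m) = QuotientGroup.mk ((g : Equiv.Perm M) m) := rfl

lemma cosetMapFun_comp (g h : ↥(parkGroup M P)) (x : M ⧸ P) :
    cosetMapFun g (cosetMapFun h x) = cosetMapFun (g * h) x := by
  induction x using Quotient.inductionOn' with
  | h m => rfl

/-- The permutation on left cosets induced by an element of Park's group. -/
def cosetPerm (g : ↥(parkGroup M P)) : Equiv.Perm (M ⧸ P) where
  toFun := cosetMapFun g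
  invFun := cosetMapFun g⁻¹
  left_inv := by
    intro x
    rw [cosetMapFun_comp, inv_mul_cancel]
    induction x using Quotient.inductionOn' with
    | h m => rfl
  right_inv := by
    intro x
    rw [cosetMapFun_comp, mul_inv_cancel]
    induction x using Quotient.inductionOn' with
    | h m => rfl

/-- The homomorphism from Park's group to the permutations of the coset space. -/
def cosetHom : ↥(parkGroup M P) →* Equiv.Perm (M ⧸ P) where
  toFun := cosetPerm
  map_one' := by
    apply Equiv.ext
    intro x
    induction x using Quotient.inductionOn' with
    | h m => rfl
  map_mul' g h := by
    apply Equiv.ext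
    intro x
    induction x using Quotient.inductionOn' with
    | h m => rfl

lemma cosetHom_apply_mk (g : ↥(parkGroup M P)) (m : M) :
    (cosetHom g : Equiv.Perm (M ⧸ P)) (QuotientGroup.mk m)
      = QuotientGroup.mk ((g : Equiv.Perm M) m) := rfl

/-- `9` does not divide the order of Park's group. -/
lemma nine_not_dvd_card (hP2 : IsPGroup 2 ↥P) (hcard3 : Nat.card (M ⧸ P) = 3)
    [Finite M] : ¬ (9 ∣ Nat.card ↥(parkGroup M P)) := by
  classical
  intro h9
  haveI : Fact (Nat.Prime 3) := ⟨by norm_num⟩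
  obtain ⟨T, hT⟩ := Sylow.exists_subgroup_card_pow_prime (G := ↥(parkGroup M P)) 3
    (n := 2) (by norm_num at h9 ⊢; exact h9)
  set f : ↥T →* Equiv.Perm (M ⧸ P) := cosetHom.comp T.subtype with hf
  -- card of range divides both 6 and 9
  have hperm6 : Nat.card (Equiv.Perm (M ⧸ P)) = 6 := by
    haveI : Fintype (M ⧸ P) := Fintype.ofFinite _
    rw [Nat.card_eq_fintype_card, Fintype.card_perm]
    rw [Nat.card_eq_fintype_card] at hcard3
    rw [hcard3]
    rfl
  have hrange6 : Nat.card ↥f.range ∣ 6 := hperm6 ▸ Subgroup.card_subgroup_dvd_card f.range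
  have hiso := QuotientGroup.quotientKerEquivRange f
  have hcardeq : Nat.card (↥T ⧸ f.ker) = Nat.card ↥f.range := Nat.card_congr hiso.toEquiv
  have hrange9 : Nat.card ↥f.range ∣ 9 := by
    rw [← hcardeq]
    have h := Subgroup.card_quotient_dvd_card (f.ker)
    rw [hT] at h
    simpa using h
  have hrange3 : Nat.card ↥f.range ∣ 3 := by
    have := Nat.dvd_gcd hrange6 hrange9
    simpa using this
  -- hence the kernel is nontrivial
  have hker : 3 ≤ Nat.card ↥(f.ker) := by
    have hmul : Nat.card ↥(f.ker) * f.ker.index = Nat.card ↥T :=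
      Subgroup.card_mul_index f.ker
    have hidx : f.ker.index = Nat.card (↥T ⧸ f.ker) := rfl
    rw [hidx, hcardeq, hT] at hmul
    have h1 : Nat.card ↥f.range ≤ 3 := Nat.le_of_dvd (by norm_num) hrange3
    have h2 : 0 < Nat.card ↥f.range := Nat.card_pos
    nlinarith [hmul]
  haveI : Nontrivial ↥f.ker := Finite.one_lt_card_iff_nontrivial.mp (by omega)
  obtain ⟨x, hx⟩ := exists_ne (1 : ↥f.ker)
  set y : ↥(parkGroup M P) := ((x : ↥T) : ↥(parkGroup M P)) with hy
  have hy9 : y ^ 9 = 1 := by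
    have h := pow_card_eq_one' (G := ↥T) (x := (x : ↥T))
    rw [hT] at h
    norm_num at h
    rw [hy]
    have := congrArg (Subtype.val) h
    push_cast at this
    exact_mod_cast this
  have hfixcosets : ∀ m : M, m⁻¹ * (y : Equiv.Perm M) m ∈ P := by
    intro m
    have hker' : f x = 1 := x.2
    have h1 : cosetHom y = 1 := hker'
    have h2 : (cosetHom y : Equiv.Perm (M ⧸ P)) (QuotientGroup.mk m) = QuotientGroup.mk m := by
      rw [h1]; rfl
    rw [cosetHom_apply_mk] at h2
    rw [QuotientGroup.eq] at h2
    have := inv_mem h2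
    simpa [mul_inv_rev] using this
  have hyfix : ∀ m : M, (y : Equiv.Perm M) m = m := fun m =>
    fix_of_mem_coset hP2 y (by decide : Odd 9) hy9 m (hfixcosets m)
  have hy1 : y = 1 := Subtype.ext (Equiv.ext hyfix)
  apply hx
  apply Subtype.ext
  apply Subtype.ext
  show ((x : ↥T) : ↥(parkGroup M P)) = ((1 : ↥T) : ↥(parkGroup M P))
  rw [← hy, hy1]
  rfl

/-- Decomposition of a join `A ⊔ C` when `A` normalizes `C`. -/
lemma mem_sup_decomp {Γ : Type*} [Group Γ] (A C : Subgroup Γ)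
    (hnorm : ∀ a ∈ A, ∀ c ∈ C, a * c * a⁻¹ ∈ C) {g : Γ} (hg : g ∈ A ⊔ C) :
    ∃ a ∈ A, ∃ c ∈ C, g = a * c := by
  let K : Subgroup Γ :=
    { carrier := {g | ∃ a ∈ A, ∃ c ∈ C, g = a * c}
      one_mem' := ⟨1, one_mem A, 1, one_mem C, by simp⟩
      mul_mem' := by
        rintro x y ⟨a₁, ha₁, c₁, hc₁, rfl⟩ ⟨a₂, ha₂, c₂, hc₂, rfl⟩
        refine ⟨a₁ * a₂, mul_mem ha₁ ha₂, (a₂⁻¹ * c₁ * a₂) * c₂,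
          mul_mem (by simpa using hnorm a₂⁻¹ (inv_mem ha₂) c₁ hc₁) hc₂, by group⟩
      inv_mem' := by
        rintro x ⟨a, ha, c, hc, rfl⟩
        exact ⟨a⁻¹, inv_mem ha, a * c⁻¹ * a⁻¹, hnorm a ha c⁻¹ (inv_mem hc), by group⟩ }
  have hAK : A ≤ K := fun a ha => ⟨a, ha, 1, one_mem C, by simp⟩
  have hCK : C ≤ K := fun c hc => ⟨1, one_mem A, c, hc, by simp⟩
  exact sup_le hAK hCK hg

/-- The centralizer of a subgroup is normalized by that subgroup. -/
lemma normalizes_centralizer {Γ : Type*} [Group Γ] (A : Subgroup Γ) :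
    ∀ a ∈ A, ∀ c ∈ Subgroup.centralizer (A : Set Γ), a * c * a⁻¹ ∈
      Subgroup.centralizer (A : Set Γ) := by
  intro a ha c hc
  rw [Subgroup.mem_centralizer_iff] at hc ⊢
  intro h hh
  have h1 : a⁻¹ * h * a ∈ (A : Set Γ) := by
    exact mul_mem (mul_mem (inv_mem ha) hh) ha
  have h2 := hc _ h1
  -- (a⁻¹ h a) c = c (a⁻¹ h a)  ⇒  h (a c a⁻¹) = (a c a⁻¹) h
  have h3 : h * (a * c * a⁻¹) = a * ((a⁻¹ * h * a) * c) * a⁻¹ := by group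
  rw [h2] at h3
  rw [h3]
  group

/-- An element of odd prime order `ℓ` in `ι(Q)·C` lies in the centralizer `C`. -/
lemma odd_order_mem_centralizer {Γ : Type*} [Group Γ] (A C : Subgroup Γ)
    (hnorm : ∀ a ∈ A, ∀ c ∈ C, a * c * a⁻¹ ∈ C)
    (hA2 : ∀ a ∈ A, ∃ K : ℕ, a ^ (2 ^ K) = 1)
    {γ : Γ} (hγ : γ ∈ A ⊔ C) (hγ3 : γ ^ 3 = 1) : γ ∈ C := by
  obtain ⟨a, ha, c, hc, rfl⟩ := mem_sup_decomp A C hnorm hγ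
  -- a³ ∈ C
  have hc' : (a⁻¹ * a⁻¹ * c * a * a) * (a⁻¹ * c * a) * c ∈ C := by
    refine mul_mem (mul_mem ?_ ?_) hc
    · have := hnorm (a⁻¹ * a⁻¹) (mul_mem (inv_mem ha) (inv_mem ha)) c hc
      simpa [mul_assoc] using this
    · have := hnorm a⁻¹ (inv_mem ha) c hc
      simpa [mul_assoc] using this
  have hkey : a ^ 3 * ((a⁻¹ * a⁻¹ * c * a * a) * (a⁻¹ * c * a) * c) = (a * c) ^ 3 := by
    rw [pow_three' (a * c), pow_three' a]
    simp only [mul_assoc, inv_mul_cancel_left, mul_inv_cancel_left]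
  have ha3 : a ^ 3 ∈ C := by
    have h1 : a ^ 3 = ((a⁻¹ * a⁻¹ * c * a * a) * (a⁻¹ * c * a) * c)⁻¹ := by
      rw [eq_inv_iff_mul_eq_one, hkey, hγ3]
    rw [h1]
    exact inv_mem hc'
  obtain ⟨K, hK⟩ := hA2 a ha
  rcases Nat.eq_zero_or_pos K with hK0 | hKpos
  · subst hK0
    simp at hK
    subst hK
    simpa using mul_mem (one_mem C : (1:Γ) ∈ C) hc
  · have hcop : Nat.Coprime 3 (2 ^ K) :=
      Nat.Coprime.pow_right _ (by decide)
    obtain ⟨e, -, he⟩ := Nat.exists_mul_mod_eq_one_of_coprime hcop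
      (Nat.one_lt_two_pow_iff.mpr (by omega))
    have h3e : 3 * e = 2 ^ K * (3 * e / 2 ^ K) + 1 := by
      conv_lhs => rw [← Nat.div_add_mod (3 * e) (2 ^ K)]
      rw [he]
    have haC : a ∈ C := by
      have h1 : a = (a ^ 3) ^ e := by
        rw [← pow_mul, h3e, pow_add, pow_mul, hK, one_pow, one_mul, pow_one]
      rw [h1]
      exact pow_mem ha3 e
    exact mul_mem haC hc

variable {M : Type*} [Group M] {P Q : Subgroup M}

lemma parkEmbed_apply (m x : M) :
    ((parkEmbed M P m : ↥(parkGroup M P)) : Equiv.Perm M) x = m * x := rfl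

lemma parkEmbed_injective : Function.Injective (parkEmbed M P) := by
  intro m m' h
  have h1 : m * 1 = m' * 1 :=
    congrArg (fun g => ((g : ↥(parkGroup M P)) : Equiv.Perm M) 1) h
  simpa using h1

lemma three_distinct_le {α : Type*} [Finite α] {a b c : α} (hab : a ≠ b) (hac : a ≠ c)
    (hbc : b ≠ c) : 3 ≤ Nat.card α := by
  classical
  letI : Fintype α := Fintype.ofFinite α
  have h3 : ({a, b, c} : Finset α).card = 3 := by
    rw [Finset.card_insert_of_notMem (by simp [hab, hac]),
      Finset.card_insert_of_notMem (by simp [hbc]), Finset.card_singleton]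
  have h5 := Finset.card_le_univ ({a, b, c} : Finset α)
  rw [Nat.card_eq_fintype_card]
  omega

/-- An element of `Park(M,P)` of order 3 centralizing `ι(Q)` yields an element of `M` of
order 3 centralizing `Q`. -/
lemma exists_order_three [Finite M] (hQP : Q ≤ P) (hP2 : IsPGroup 2 ↥P)
    (hcard3 : Nat.card (M ⧸ P) = 3) (g : ↥(parkGroup M P)) (hg3 : orderOf g = 3)
    (hgC : g ∈ Subgroup.centralizer ((Q.map (parkEmbed M P)) : Set ↥(parkGroup M P))) :
    ∃ t : M, orderOf t = 3 ∧ t ∈ Subgroup.centralizer (Q : Set M) := by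
  classical
  have hg3' : g ^ 3 = 1 := by rw [← hg3]; exact pow_orderOf_eq_one g
  -- g commutes with left translations by Q
  have hcomm : ∀ q ∈ Q, ∀ m : M, (g : Equiv.Perm M) (q * m) = q * (g : Equiv.Perm M) m := by
    intro q hq m
    rw [Subgroup.mem_centralizer_iff] at hgC
    have h1 := hgC (parkEmbed M P q) ⟨q, hq, rfl⟩
    have h2 : q * (g : Equiv.Perm M) m = (g : Equiv.Perm M) (q * m) :=
      congrArg (fun z => ((z : ↥(parkGroup M P)) : Equiv.Perm M) m) h1
    exact h2.symm
  set m₀ : M := (g : Equiv.Perm M) 1 with hm₀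
  set m₁ : M := (g : Equiv.Perm M) m₀ with hm₁
  -- m₀ centralizes Q
  have hq₀ : ∀ q ∈ Q, q * m₀ = m₀ * q := by
    intro q hq
    have h1 : (g : Equiv.Perm M) (1 * q) = m₀ * q := park_apply g 1 q (hQP hq)
    have h2 : (g : Equiv.Perm M) (q * 1) = q * m₀ := by rw [hcomm q hq 1, hm₀]
    rw [one_mul] at h1
    rw [mul_one] at h2
    rw [← h1, ← h2]
  -- m₁ centralizes Q
  have hq₁ : ∀ q ∈ Q, q * m₁ = m₁ * q := by
    intro q hq
    have h1 : (g : Equiv.Perm M) (m₀ * q) = m₁ * q := park_apply g m₀ q (hQP hq)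
    have h2 : (g : Equiv.Perm M) (q * m₀) = q * m₁ := by rw [hcomm q hq m₀, hm₁]
    rw [← hq₀ q hq] at h1
    rw [h1] at h2
    exact h2.symm
  -- no fixed cosets
  have hnf := (no_fixed_coset hP2 hcard3 g (by norm_num) (by decide) hg3).2
  have hm₀P : m₀ ∉ P := by
    have := hnf 1
    simpa using this
  have hgm₁ : (g : Equiv.Perm M) m₁ = 1 := by
    have h1 : ((g : Equiv.Perm M) ^ 3) 1 = 1 := by
      rw [← park_pow_apply, hg3']
      rfl
    calc (g : Equiv.Perm M) m₁ = ((g : Equiv.Perm M) ^ 3) 1 := by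
          rw [perm_pow_succ_apply, perm_pow_succ_apply]
          rfl
      _ = 1 := h1
  have hm₁P : m₁ ∉ P := by
    intro hmem
    have := hnf m₁
    rw [hgm₁] at this
    exact this (by simpa using inv_mem hmem)
  have hm₀₁ : m₀⁻¹ * m₁ ∉ P := by
    have := hnf m₀
    rw [← hm₁] at this
    exact this
  -- the centralizer C_M(Q) and its image in Perm(M ⧸ P)
  set C : Subgroup M := Subgroup.centralizer (Q : Set M) with hC
  have hm₀C : m₀ ∈ C := Subgroup.mem_centralizer_iff.mpr (fun q hq => hq₀ q hq)
  have hm₁C : m₁ ∈ C := Subgroup.mem_centralizer_iff.mpr (fun q hq => hq₁ q hq)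
  set π : M →* Equiv.Perm (M ⧸ P) := MulAction.toPermHom M (M ⧸ P) with hπ
  set R : Subgroup (Equiv.Perm (M ⧸ P)) := C.map π with hR
  haveI : Finite (M ⧸ P) := Quotient.finite _
  -- evaluation of π at the identity coset
  have heval : ∀ m : M, (π m) (QuotientGroup.mk 1) = (QuotientGroup.mk m : M ⧸ P) := by
    intro m
    show m • (QuotientGroup.mk (1 : M) : M ⧸ P) = QuotientGroup.mk m
    rw [MulAction.Quotient.smul_mk]
    simp
  have hne1 : ∀ m : M, m ∉ P → π m ≠ 1 := by
    intro m hm h1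
    have := heval m
    rw [h1] at this
    simp only [Equiv.Perm.coe_one, id_eq] at this
    rw [QuotientGroup.eq] at this
    exact hm (by simpa using inv_mem this)
  have hne01 : π m₀ ≠ π m₁ := by
    intro h
    have h1 := heval m₀
    rw [h] at h1
    rw [heval m₁] at h1
    rw [QuotientGroup.eq] at h1
    exact hm₀₁ (by simpa using inv_mem h1)
  -- card R ≥ 3 via three distinct elements
  have h3R : 3 ≤ Nat.card ↥R := by
    have hmem0 : π m₀ ∈ R := ⟨m₀, hm₀C, rfl⟩
    have hmem1 : π m₁ ∈ R := ⟨m₁, hm₁C, rfl⟩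
    refine three_distinct_le (a := (⟨1, one_mem R⟩ : ↥R)) (b := ⟨π m₀, hmem0⟩)
      (c := ⟨π m₁, hmem1⟩) ?_ ?_ ?_
    · exact fun h => hne1 m₀ hm₀P (congrArg Subtype.val h).symm
    · exact fun h => hne1 m₁ hm₁P (congrArg Subtype.val h).symm
    · exact fun h => hne01 (congrArg Subtype.val h)
  -- card R divides 6
  have hperm6 : Nat.card (Equiv.Perm (M ⧸ P)) = 6 := by
    haveI : Fintype (M ⧸ P) := Fintype.ofFinite _
    rw [Nat.card_eq_fintype_card, Fintype.card_perm]
    rw [Nat.card_eq_fintype_card] at hcard3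
    rw [hcard3]
    rfl
  have hR6 : Nat.card ↥R ∣ 6 := hperm6 ▸ Subgroup.card_subgroup_dvd_card R
  have h3dvdR : 3 ∣ Nat.card ↥R := by
    have h6 : Nat.card ↥R ≤ 6 := Nat.le_of_dvd (by norm_num) hR6
    interval_cases h : Nat.card ↥R <;> revert hR6 <;> decide
  -- 3 divides card C
  have hRC : Nat.card ↥R ∣ Nat.card ↥C := by
    have hrange : (π.comp C.subtype).range = R := by
      rw [MonoidHom.range_comp, Subgroup.range_subtype]
    have hiso := QuotientGroup.quotientKerEquivRange (π.comp C.subtype)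
    have hcardeq : Nat.card (↥C ⧸ (π.comp C.subtype).ker) = Nat.card ↥(π.comp C.subtype).range :=
      Nat.card_congr hiso.toEquiv
    rw [hrange] at hcardeq
    rw [← hcardeq]
    exact Subgroup.card_quotient_dvd_card _
  have h3C : 3 ∣ Nat.card ↥C := dvd_trans h3dvdR hRC
  -- Cauchy
  haveI : Fact (Nat.Prime 3) := ⟨by norm_num⟩
  obtain ⟨t, ht⟩ := exists_prime_orderOf_dvd_card' (G := ↥C) 3 h3C
  refine ⟨(t : M), ?_, t.2⟩
  rw [← ht]
  exact orderOf_injective C.subtype Subtype.coe_injective t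

variable {M : Type*} [Group M] [Finite M] {P Q : Subgroup M}

lemma qcM_le_qcG : qcM M P Q ≤ qcG M P Q :=
  sup_le_sup_left inf_le_right _

lemma hA2_park (hQP : Q ≤ P) (hP2 : IsPGroup 2 ↥P) :
    ∀ a ∈ Q.map (parkEmbed M P), ∃ K : ℕ, a ^ (2 ^ K) = 1 := by
  rintro _ ⟨q, hq, rfl⟩
  obtain ⟨K, hK⟩ := hP2 ⟨q, hQP hq⟩
  refine ⟨K, ?_⟩
  have hq1 : q ^ (2 ^ K) = 1 := by
    have := congrArg Subtype.val hK
    simpa using this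
  rw [← map_pow, hq1, map_one]

/-- If `3` divides the order of `qcG`, then `3` divides the order of `qcM`. -/
lemma three_dvd_qcM (hQP : Q ≤ P) (hP2 : IsPGroup 2 ↥P) (hcard3 : Nat.card (M ⧸ P) = 3)
    (h3 : 3 ∣ Nat.card ↥(qcG M P Q)) : 3 ∣ Nat.card ↥(qcM M P Q) := by
  haveI : Fact (Nat.Prime 3) := ⟨by norm_num⟩
  obtain ⟨γ, hγord⟩ := exists_prime_orderOf_dvd_card' (G := ↥(qcG M P Q)) 3 h3
  set γ' : ↥(parkGroup M P) := (γ : ↥(parkGroup M P)) with hγ'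
  have hordγ' : orderOf γ' = 3 := by
    rw [← hγord]
    exact orderOf_injective (qcG M P Q).subtype Subtype.coe_injective γ
  have hγ3 : γ' ^ 3 = 1 := by rw [← hordγ']; exact pow_orderOf_eq_one γ'
  have hγC : γ' ∈ Subgroup.centralizer ((Q.map (parkEmbed M P)) :
      Set ↥(parkGroup M P)) := by
    refine odd_order_mem_centralizer (Q.map (parkEmbed M P)) _ (normalizes_centralizer _)
      (hA2_park hQP hP2) ?_ hγ3
    exact γ.2
  obtain ⟨t, ht3, htC⟩ := exists_order_three hQP hP2 hcard3 γ' hordγ' hγC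
  have hcent : parkEmbed M P t ∈ Subgroup.centralizer ((Q.map (parkEmbed M P)) :
      Set ↥(parkGroup M P)) := by
    rw [Subgroup.mem_centralizer_iff]
    rintro _ ⟨q, hq, rfl⟩
    rw [← map_mul, ← map_mul, Subgroup.mem_centralizer_iff.mp htC q hq]
  have hmem : parkEmbed M P t ∈ qcM M P Q :=
    Subgroup.mem_sup_right ⟨⟨t, rfl⟩, hcent⟩
  have hx : orderOf (⟨parkEmbed M P t, hmem⟩ : ↥(qcM M P Q)) = 3 := by
    have e1 := orderOf_injective (qcM M P Q).subtype Subtype.coe_injective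
      (⟨parkEmbed M P t, hmem⟩ : ↥(qcM M P Q))
    have e2 := orderOf_injective (parkEmbed M P) parkEmbed_injective t
    calc orderOf (⟨parkEmbed M P t, hmem⟩ : ↥(qcM M P Q))
        = orderOf ((qcM M P Q).subtype ⟨parkEmbed M P t, hmem⟩) := e1.symm
      _ = orderOf (parkEmbed M P t) := rfl
      _ = orderOf t := e2
      _ = 3 := ht3
  rw [← hx]
  exact orderOf_dvd_natCard _

/-- The index of `qcM` in `qcG` is a power of 2. -/
lemma index_two_pow (hQP : Q ≤ P) (hP2 : IsPGroup 2 ↥P) (hcard3 : Nat.card (M ⧸ P) = 3) :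
    ∃ c : ℕ, ((qcM M P Q).subgroupOf (qcG M P Q)).index = 2 ^ c := by
  classical
  set H : Subgroup ↥(qcG M P Q) := (qcM M P Q).subgroupOf (qcG M P Q) with hH
  have hb : Nat.card ↥H = Nat.card ↥(qcM M P Q) :=
    Nat.card_congr (Subgroup.subgroupOfEquivOfLe qcM_le_qcG).toEquiv
  have hmul : Nat.card ↥H * H.index = Nat.card ↥(qcG M P Q) := Subgroup.card_mul_index H
  have hnodd : ∀ ℓ : ℕ, Nat.Prime ℓ → Odd ℓ → ¬ ℓ ∣ H.index := by
    intro ℓ hℓ hodd hdvd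
    have hdvda : ℓ ∣ Nat.card ↥(qcG M P Q) := dvd_trans hdvd (Subgroup.index_dvd_card H)
    -- via Cauchy get an element of order ℓ in qcG, hence ℓ = 3
    haveI : Fact (Nat.Prime ℓ) := ⟨hℓ⟩
    obtain ⟨γ, hγord⟩ := exists_prime_orderOf_dvd_card' (G := ↥(qcG M P Q)) ℓ hdvda
    have hordγ' : orderOf (γ : ↥(parkGroup M P)) = ℓ := by
      rw [← hγord]
      exact orderOf_injective (qcG M P Q).subtype Subtype.coe_injective γ
    obtain ⟨hl3, -⟩ := no_fixed_coset hP2 hcard3 _ hℓ hodd hordγ'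
    subst hl3
    have h3M := three_dvd_qcM hQP hP2 hcard3 hdvda
    have h9 : 9 ∣ Nat.card ↥(qcG M P Q) := by
      rw [← hmul]
      have : (3 : ℕ) * 3 ∣ Nat.card ↥H * H.index := by
        apply mul_dvd_mul _ hdvd
        rw [hb]
        exact h3M
      simpa using this
    exact nine_not_dvd_card hP2 hcard3
      (dvd_trans h9 (Subgroup.card_subgroup_dvd_card (qcG M P Q)))
  haveI : Finite (↥(qcG M P Q) ⧸ H) := Quotient.finite _
  have hi0 : H.index ≠ 0 := Subgroup.index_ne_zero_of_finite
  refine ⟨(H.index).factorization 2, ?_⟩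
  set i := H.index with hi
  set j := i / 2 ^ i.factorization 2 with hj
  have hsplit : 2 ^ i.factorization 2 * j = i := Nat.ordProj_mul_ordCompl_eq_self i 2
  have hj1 : j = 1 := by
    by_contra hne
    obtain ⟨q, hq, hqdvd⟩ := Nat.exists_prime_and_dvd hne
    have hq2 : ¬ (2 ∣ j) := Nat.not_dvd_ordCompl Nat.prime_two hi0
    have hqne2 : q ≠ 2 := by
      intro h
      rw [h] at hqdvd
      exact hq2 hqdvd
    have hqodd : Odd q := hq.odd_of_ne_two hqne2
    have hqi : q ∣ i := dvd_trans hqdvd (Nat.ordCompl_dvd i 2)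
    exact hnodd q hq hqodd hqi
  rw [hj1, mul_one] at hsplit
  exact hsplit.symm

/-- If `H` has 2-power index in finite `Γ`, a Sylow 2-subgroup acts transitively on `Γ ⧸ H`. -/
lemma sylow_transitive {Γ : Type*} [Group Γ] [Finite Γ] (H : Subgroup Γ) {c : ℕ}
    (hidx : H.index = 2 ^ c) :
    ∃ S : Subgroup Γ, IsPGroup 2 ↥S ∧
      ∀ x : Γ ⧸ H, ∃ s ∈ S, s • ((1 : Γ) : Γ ⧸ H) = x := by
  classical
  haveI : Fact (Nat.Prime 2) := ⟨Nat.prime_two⟩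
  obtain ⟨S'⟩ := (inferInstance : Nonempty (Sylow 2 Γ))
  refine ⟨S'.toSubgroup, S'.2, ?_⟩
  set x₀ : Γ ⧸ H := ((1 : Γ) : Γ ⧸ H) with hx₀
  set a : ℕ := Nat.card Γ with ha
  set b : ℕ := Nat.card ↥H with hb
  have hb0 : b ≠ 0 := Nat.card_pos.ne'
  have hmul : b * 2 ^ c = a := by rw [← hidx]; exact Subgroup.card_mul_index H
  have hcardS : Nat.card ↥S'.toSubgroup = 2 ^ (a.factorization 2) :=
    Sylow.card_eq_multiplicity S'
  -- stabilizer of the identity coset embeds into H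
  set stab := MulAction.stabilizer ↥S'.toSubgroup x₀ with hstab
  have hstabmem : ∀ s : ↥stab, ((s : ↥S'.toSubgroup) : Γ) ∈ H := by
    intro s
    have h1 : ((s : ↥S'.toSubgroup) : Γ) • x₀ = x₀ := s.2
    rw [hx₀, MulAction.Quotient.smul_mk] at h1
    rw [QuotientGroup.eq] at h1
    have := inv_mem h1
    simpa using this
  set φ : ↥stab →* ↥H :=
    { toFun := fun s => ⟨((s : ↥S'.toSubgroup) : Γ), hstabmem s⟩
      map_one' := rfl
      map_mul' := fun s t => rfl } with hφ
  have hφinj : Function.Injective φ := by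
    intro s t hst
    have h1 : ((s : ↥S'.toSubgroup) : Γ) = ((t : ↥S'.toSubgroup) : Γ) := by
      have := congrArg Subtype.val hst
      exact this
    apply Subtype.ext
    apply Subtype.ext
    exact h1
  have hstabcard : Nat.card ↥stab = Nat.card ↥φ.range :=
    Nat.card_congr (MonoidHom.ofInjective hφinj).toEquiv
  have hstabdvdH : Nat.card ↥stab ∣ b := by
    rw [hstabcard]
    exact Subgroup.card_subgroup_dvd_card φ.range
  have hstabdvdS : Nat.card ↥stab ∣ 2 ^ (a.factorization 2) := by
    rw [← hcardS]
    exact Subgroup.card_subgroup_dvd_card stab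
  obtain ⟨e, he_le, he⟩ := (Nat.dvd_prime_pow Nat.prime_two).mp hstabdvdS
  have heb : e ≤ b.factorization 2 := by
    apply (Nat.Prime.pow_dvd_iff_le_factorization Nat.prime_two hb0).mp
    rw [← he]
    exact hstabdvdH
  have hva : a.factorization 2 = b.factorization 2 + c := by
    rw [← hmul, Nat.factorization_mul hb0 (by positivity)]
    simp [Nat.Prime.factorization_pow, Nat.prime_two]
  -- orbit-stabilizer
  letI : Fintype Γ := Fintype.ofFinite Γ
  letI : Fintype ↥S'.toSubgroup := Fintype.ofFinite _
  letI : Fintype (Γ ⧸ H) := Fintype.ofFinite _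
  letI : Fintype ↥(MulAction.orbit ↥S'.toSubgroup x₀) := Fintype.ofFinite _
  letI : Fintype ↥stab := Fintype.ofFinite _
  have horb := MulAction.card_orbit_mul_card_stabilizer_eq_card_group ↥S'.toSubgroup x₀
  rw [← Nat.card_eq_fintype_card, ← Nat.card_eq_fintype_card, ← Nat.card_eq_fintype_card,
    ← hstab, hcardS, he, hva] at horb
  have horbge : 2 ^ c ≤ Nat.card ↥(MulAction.orbit ↥S'.toSubgroup x₀) := by
    have h1 : 2 ^ c * 2 ^ e ≤ Nat.card ↥(MulAction.orbit ↥S'.toSubgroup x₀) * 2 ^ e := by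
      rw [horb, ← pow_add]
      exact Nat.pow_le_pow_right (by norm_num) (by omega)
    exact Nat.le_of_mul_le_mul_right h1 (by positivity)
  -- orbit is everything
  have huniv : MulAction.orbit ↥S'.toSubgroup x₀ = Set.univ := by
    apply Set.eq_of_subset_of_ncard_le (Set.subset_univ _)
    rw [Set.ncard_univ, ← Nat.card_coe_set_eq]
    calc Nat.card (Γ ⧸ H) = H.index := (Subgroup.index_eq_card H).symm
      _ = 2 ^ c := hidx
      _ ≤ _ := horbge
  intro x
  have hx : x ∈ MulAction.orbit ↥S'.toSubgroup x₀ := by rw [huniv]; trivial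
  obtain ⟨s, rfl⟩ := hx
  exact ⟨↑s, s.2, rfl⟩

end ParkAux

/-- let `M` be a finite group of order `3·2^n` (`n ≥ 3`) with no
non-trivial normal subgroup of odd order and with a non-normal Sylow `2`-subgroup
`P`, let `G = Park(M, P)`, `ι` Park's embedding, and `k` an algebraically closed
field of characteristic `2`.  Then for every subgroup `Q ≤ P`, the permutation
`k`-module of the group `ι(Q)·C_G(ι(Q))` on the left coset space
`(ι(Q)·C_G(ι(Q))) / (ι(Q)·C_{ι(M)}(ι(Q)))` is indecomposable. -/
theorem statement1 (n : ℕ) (hn : 3 ≤ n)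
    (M : Type*) [Group M] [Finite M] (hM : Nat.card M = 3 * 2 ^ n)
    (hodd : ∀ K : Subgroup M, K.Normal → Odd (Nat.card K) → K = ⊥)
    (P : Subgroup M) (hsyl : IsSylowIn 2 ⊤ P) (hPnn : ¬ P.Normal)
    (k : Type*) [Field k] [IsAlgClosed k] [CharP k 2]
    (Q : Subgroup M) (hQP : Q ≤ P) :
    IsIndecomposableModule (MonoidAlgebra k ↥(qcG M P Q))
      (PermutationModule k ↥(qcG M P Q)
        (↥(qcG M P Q) ⧸ (qcM M P Q).subgroupOf (qcG M P Q))) := by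
  classical
  haveI : Fact (Nat.Prime 2) := ⟨Nat.prime_two⟩
  have hP2 : IsPGroup 2 ↥P := hsyl.2.1
  obtain ⟨S, hPS⟩ := IsPGroup.exists_le_sylow hP2
  have hSP : (S : Subgroup M) = P := hsyl.2.2 S le_top S.2 hPS
  have hcardP : Nat.card ↥P = 2 ^ n := by
    have h1 := Sylow.card_eq_multiplicity S
    rw [hSP] at h1
    rw [h1, hM]
    congr 1
    rw [Nat.factorization_mul (by norm_num) (by positivity)]
    simp [Nat.Prime.factorization_pow, Nat.prime_two,
      Nat.Prime.factorization (by norm_num : Nat.Prime 3)]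
  have hidx3 : P.index = 3 := by
    have h := Subgroup.card_mul_index P
    rw [hcardP, hM] at h
    have h2 : (0:ℕ) < 2 ^ n := by positivity
    nlinarith [h]
  have hcard3 : Nat.card (M ⧸ P) = 3 := by
    rw [← Subgroup.index_eq_card P]
    exact hidx3
  obtain ⟨c, hc⟩ := ParkAux.index_two_pow (Q := Q) hQP hP2 hcard3
  obtain ⟨S₂, hS₂p, htrans⟩ :=
    ParkAux.sylow_transitive ((qcM M P Q).subgroupOf (qcG M P Q)) hc
  exact indec_of_transitive (k := k) (p := 2) S₂ hS₂p
    (((1 : ↥(qcG M P Q)) : ↥(qcG M P Q) ⧸ (qcM M P Q).subgroupOf (qcG M P Q))) htrans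
end

section
/- Let p be a prime, G a finite group, k an algebraically closed field of characteristic p, and H a subgroup of G whose index |G : H| is a power of p. Then the permutation kG-module k[G/H] (that is, Ind_H^G(k)) is indecomposable. -/
open Representation MulAction

section SigmaDef
variable (k G : Type*) [CommSemiring k] [Group G] [Finite G] (H : Subgroup G)

noncomputable def sigmaV : (Representation.ofMulAction k G (G ⧸ H)).asModule :=
  (Representation.ofMulAction k G (G ⧸ H)).asModuleEquiv.symm
    (MonoidAlgebra.ofCoeff (Finsupp.equivFunOnFinite.symm fun _ => (1 : k)))

variable {G}

end SigmaDef

lemma sylow_transitive {G : Type*} [Group G] [Finite G] (H : Subgroup G)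
    (p : ℕ) [Fact p.Prime] (hind : ∃ n : ℕ, H.index = p ^ n)
    (P : Sylow p G) (x y : G ⧸ H) : ∃ g : G, g ∈ (P : Subgroup G) ∧ g • x = y := by
  obtain ⟨n, hn⟩ := hind
  set K : Subgroup G := (P : Subgroup G) with hK
  have hstab : MulAction.stabilizer K ((1 : G) : G ⧸ H) = H.subgroupOf K := by
    ext g
    have hsm : (g • (((1 : G)) : G ⧸ H)) = ((g : G) : G ⧸ H) := by
      change ((g : G) • (((1 : G)) : G ⧸ H)) = _
      rw [MulAction.Quotient.smul_mk, smul_eq_mul, mul_one]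
    simp [MulAction.mem_stabilizer_iff, hsm, Subgroup.mem_subgroupOf, QuotientGroup.eq]
  have hcard : Nat.card (MulAction.orbit K ((1 : G) : G ⧸ H)) = H.relIndex K := by
    rw [Nat.card_congr (MulAction.orbitEquivQuotientStabilizer K ((1 : G) : G ⧸ H))]
    rw [hstab]; rfl
  have hdvd : H.index ∣ H.relIndex K * K.index := by
    have h1 : H.relIndex (K ⊓ ⊤) * K.relIndex ⊤ = (H ⊓ K).relIndex ⊤ :=
      Subgroup.relIndex_inf_mul_relIndex H K ⊤
    rw [inf_top_eq, Subgroup.relIndex_top_right, Subgroup.relIndex_top_right] at h1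
    rw [h1]
    exact Subgroup.index_dvd_of_le inf_le_left
  have hcop : Nat.Coprime (p ^ n) K.index := by
    refine Nat.Coprime.pow_left _ ?_
    exact (Nat.Prime.coprime_iff_not_dvd (Fact.out)).mpr (P.not_dvd_index)
  have hpn_dvd : p ^ n ∣ H.relIndex K := by
    refine hcop.dvd_of_dvd_mul_right ?_
    rw [← hn]; exact hdvd
  -- the orbit is everything
  have horb : MulAction.orbit K ((1 : G) : G ⧸ H) = Set.univ := by
    refine Set.eq_of_subset_of_ncard_le (Set.subset_univ _) ?_ (Set.finite_univ)
    rw [Set.ncard_univ, ← Nat.card_coe_set_eq, hcard]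
    haveI : Nonempty (MulAction.orbit K ((1 : G) : G ⧸ H)) :=
      ⟨⟨_, MulAction.mem_orbit_self _⟩⟩
    have hpos : 0 < H.relIndex K :=
      Nat.pos_of_ne_zero (by rw [← hcard]; exact Nat.card_pos.ne')
    have : Nat.card (G ⧸ H) = p ^ n := by rw [← hn]; rfl
    rw [this]
    exact Nat.le_of_dvd hpos hpn_dvd
  have hx : x ∈ MulAction.orbit K ((1 : G) : G ⧸ H) := horb ▸ Set.mem_univ x
  have hy : y ∈ MulAction.orbit K ((1 : G) : G ⧸ H) := horb ▸ Set.mem_univ y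
  obtain ⟨gx, hgx⟩ := hx
  obtain ⟨gy, hgy⟩ := hy
  simp only at hgx hgy
  refine ⟨(gy * gx⁻¹ : K), (gy * gx⁻¹ : K).2, ?_⟩
  have : ((gy * gx⁻¹ : K) : G) • x = (gy : K) • ((gx⁻¹ : K) • x) := by
    rw [← Submonoid.smul_def, mul_smul]
    rfl
  rw [this, ← hgx, inv_smul_smul, hgy]



section Fixed

variable {p : ℕ} [Fact p.Prime] {k : Type*} [Field k] [CharP k p]
  {G : Type*} [Group G] [Finite G]

lemma exists_fixed_vec {V : Type*} [AddCommGroup V] [Module k V]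
    (ρ : Representation k G V) (P : Sylow p G)
    (U : Submodule (MonoidAlgebra k G) ρ.asModule) (hU : U ≠ ⊥) :
    ∃ v : ρ.asModule, v ∈ U ∧ v ≠ 0 ∧
      ∀ g : G, g ∈ (P : Subgroup G) → (MonoidAlgebra.of k G g) • v = v := by
  classical
  haveI : NeZero p := ⟨(Fact.out : p.Prime).ne_zero⟩
  obtain ⟨u, hu, hu0⟩ := (Submodule.ne_bot_iff U).mp hU
  set K : Subgroup G := (P : Subgroup G) with hK
  have htor : ∀ v : ρ.asModule, p • v = 0 := by
    intro v
    have h1 : ((p : ℕ) : k) • v = p • v := Nat.cast_smul_eq_nsmul k p v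
    rw [← h1, CharP.cast_eq_zero k p, zero_smul]
  haveI : Module (ZMod p) ρ.asModule := AddCommGroup.zmodModule htor
  set S : Set ρ.asModule := Set.range (fun g : ↥K => (MonoidAlgebra.of k G (g : G)) • u)
    with hS
  set A : Submodule (ZMod p) ρ.asModule := Submodule.span (ZMod p) S with hA
  have hSU : ∀ x : ρ.asModule, x ∈ S → x ∈ U := by
    rintro _ ⟨g, rfl⟩
    exact U.smul_mem _ hu
  have hAU : ∀ x : ρ.asModule, x ∈ A → x ∈ U := by
    intro x hx
    refine Submodule.span_induction (fun y hy => hSU y hy) (zero_mem U)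
      (fun y z _ _ hy hz => add_mem hy hz) (fun c y _ hy => ZMod.smul_mem hy c) hx
  have hstable : ∀ (g : ↥K), ∀ x : ρ.asModule, x ∈ A → (MonoidAlgebra.of k G (g : G)) • x ∈ A := by
    intro g x hx
    refine Submodule.span_induction ?_ ?_ ?_ ?_ hx
    · rintro _ ⟨g', rfl⟩
      refine Submodule.subset_span ⟨g * g', ?_⟩
      simp only [Subgroup.coe_mul, map_mul, mul_smul]
    · simp only [smul_zero]; exact zero_mem A
    · intro y z _ _ hy hz
      rw [smul_add]; exact add_mem hy hz
    · intro c y _ hy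
      have hcomm : (MonoidAlgebra.of k G (g : G)) • (c • y)
          = c • ((MonoidAlgebra.of k G (g : G)) • y) :=
        ZMod.map_smul (DistribSMul.toAddMonoidHom ρ.asModule
          (MonoidAlgebra.of k G (g : G))) c y
      rw [hcomm]
      exact A.smul_mem c hy
  letI : MulAction ↥K ↥A :=
    { smul := fun g a => ⟨(MonoidAlgebra.of k G (g : G)) • (a : ρ.asModule),
        hstable g a a.2⟩
      one_smul := fun a => Subtype.ext (by
        show (MonoidAlgebra.of k G ((1 : ↥K) : G)) • (a : ρ.asModule) = a
        rw [OneMemClass.coe_one, map_one, one_smul])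
      mul_smul := fun g h a => Subtype.ext (by
        show (MonoidAlgebra.of k G ((g * h : ↥K) : G)) • (a : ρ.asModule) = _
        simp only [Subgroup.coe_mul, map_mul, mul_smul]
        rfl) }
  haveI : Module.Finite (ZMod p) A := Module.Finite.span_of_finite _ (Set.finite_range _)
  haveI : Finite ↥A := Module.finite_of_finite (ZMod p)
  have h1A : (MonoidAlgebra.of k G ((1 : ↥K) : G)) • u = u := by
    rw [OneMemClass.coe_one, map_one, one_smul]
  have huA : u ∈ A := Submodule.subset_span ⟨1, h1A⟩
  haveI : Nontrivial ↥A := ⟨⟨⟨u, huA⟩, 0, by simp [Subtype.ext_iff, hu0]⟩⟩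
  have hdvd : p ∣ Nat.card ↥A := by
    haveI : Fintype ↥A := Fintype.ofFinite _
    have hcard := Module.card_eq_pow_finrank (K := ZMod p) (V := ↥A)
    rw [ZMod.card] at hcard
    rw [Nat.card_eq_fintype_card, hcard]
    exact dvd_pow_self p (Module.finrank_pos (R := ZMod p) (M := ↥A)).ne'
  have hfix0 : (0 : ↥A) ∈ MulAction.fixedPoints ↥K ↥A := by
    intro g
    exact Subtype.ext (smul_zero _)
  obtain ⟨b, hbfix, hb0⟩ :=
    (P.isPGroup').exists_fixed_point_of_prime_dvd_card_of_fixed_point (α := ↥A) hdvd hfix0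
  refine ⟨(b : ρ.asModule), hAU _ b.2, fun h => hb0 (Subtype.ext h.symm), ?_⟩
  intro g hg
  exact congrArg Subtype.val (hbfix ⟨g, hg⟩)

end Fixed

section Main

variable {p : ℕ} [Fact p.Prime] {k : Type*} [Field k] [CharP k p]
  {G : Type*} [Group G] [Finite G] {H : Subgroup G}

lemma sigma_mem (hind : ∃ n : ℕ, H.index = p ^ n)
    (U : Submodule (MonoidAlgebra k G) (Representation.ofMulAction k G (G ⧸ H)).asModule)
    (hU : U ≠ ⊥) : sigmaV k G H ∈ U := by
  classical
  obtain ⟨P⟩ : Nonempty (Sylow p G) := inferInstance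
  obtain ⟨v, hvU, hv0, hfix⟩ :=
    exists_fixed_vec (Representation.ofMulAction k G (G ⧸ H)) P U hU
  set f : MonoidAlgebra k (G ⧸ H) := (Representation.ofMulAction k G (G ⧸ H)).asModuleEquiv v with hf
  have hρf : ∀ g ∈ (P : Subgroup G), (Representation.ofMulAction k G (G ⧸ H)) g f = f := by
    intro g hg
    have h := congrArg (Representation.ofMulAction k G (G ⧸ H)).asModuleEquiv (hfix g hg)
    rwa [Representation.asModuleEquiv_map_smul, Representation.asAlgebraHom_of] at h
  have hconst : ∀ x y : G ⧸ H, f.coeff x = f.coeff y := by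
    intro x y
    obtain ⟨g, hgP, hgyx⟩ := sylow_transitive H p hind P y x
    calc f.coeff x = f.coeff (g • y) := by rw [hgyx]
    _ = ((Representation.ofMulAction k G (G ⧸ H)) g f).coeff (g • y) := by rw [hρf g hgP]
    _ = f.coeff (g⁻¹ • (g • y)) := Representation.coeff_ofMulAction g f (g • y)
    _ = f.coeff y := by rw [inv_smul_smul]
  set c : k := f.coeff ((1 : G) : G ⧸ H) with hc
  have hvf : (Representation.ofMulAction k G (G ⧸ H)).asModuleEquiv.symm f = v :=
    (Representation.ofMulAction k G (G ⧸ H)).asModuleEquiv.symm_apply_apply v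
  have hc0 : c ≠ 0 := by
    intro h
    apply hv0
    have hf0 : f = 0 := MonoidAlgebra.coeff_injective <| Finsupp.ext fun x => by
      rw [hconst x ((1 : G) : G ⧸ H), ← hc, h, MonoidAlgebra.coeff_zero, Finsupp.coe_zero,
        Pi.zero_apply]
    rw [← hvf, hf0, map_zero]
  have hσ : MonoidAlgebra.ofCoeff (Finsupp.equivFunOnFinite.symm fun _ => (1 : k)) = c⁻¹ • f := by
    apply MonoidAlgebra.coeff_injective
    ext x
    rw [MonoidAlgebra.coeff_smul_apply, hconst x ((1 : G) : G ⧸ H), ← hc, smul_eq_mul,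
      inv_mul_cancel₀ hc0]
    rfl
  show (Representation.ofMulAction k G (G ⧸ H)).asModuleEquiv.symm
      (MonoidAlgebra.ofCoeff (Finsupp.equivFunOnFinite.symm fun _ => (1 : k))) ∈ U
  rw [hσ, Representation.asModuleEquiv_symm_map_smul, hvf]
  exact U.smul_mem _ hvU

theorem statement3' (hind : ∃ n : ℕ, H.index = p ^ n) :
    Nontrivial (Representation.ofMulAction k G (G ⧸ H)).asModule ∧
    ∀ U W : Submodule (MonoidAlgebra k G) (Representation.ofMulAction k G (G ⧸ H)).asModule,
      IsCompl U W → U = ⊥ ∨ W = ⊥ := by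
  constructor
  · haveI : Nonempty (G ⧸ H) := ⟨((1 : G) : G ⧸ H)⟩
    haveI : Nontrivial ((G ⧸ H) →₀ k) := inferInstance
    exact (Representation.ofMulAction k G (G ⧸ H)).asModuleEquiv.toEquiv.nontrivial
  · intro U W hc
    by_contra hcon
    push_neg at hcon
    obtain ⟨hU, hW⟩ := hcon
    have h1 := sigma_mem hind U hU
    have h2 := sigma_mem hind W hW
    have h0 : sigmaV k G H = 0 :=
      (Submodule.mem_bot _).mp (hc.inf_eq_bot ▸ Submodule.mem_inf.mpr ⟨h1, h2⟩)
    have h3 : (Finsupp.equivFunOnFinite.symm fun _ => (1 : k)) = (0 : (G ⧸ H) →₀ k) := by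
      have := congrArg (Representation.ofMulAction k G (G ⧸ H)).asModuleEquiv h0
      unfold sigmaV at this
      rwa [LinearEquiv.apply_symm_apply, map_zero, MonoidAlgebra.ofCoeff_eq_zero] at this
    have h4 := DFunLike.congr_fun h3 ((1 : G) : G ⧸ H)
    rw [Finsupp.coe_zero, Pi.zero_apply] at h4
    exact one_ne_zero (h4 : (1 : k) = 0)

end Main


/-- If `k` is an algebraically closed field of characteristic `p`, `G` a
finite group and `H ≤ G` a subgroup of `p`-power index, then the permutation module
`k[G/H]` is an indecomposable `kG`-module. -/
theorem statement3 (p : ℕ) [Fact p.Prime] (k : Type*) [Field k] [IsAlgClosed k] [CharP k p]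
    (G : Type*) [Group G] [Finite G] (H : Subgroup G) (hind : ∃ n : ℕ, H.index = p ^ n) :
    IsIndecomposableModule (MonoidAlgebra k G) (PermutationModule k G (G ⧸ H)) := by
  exact statement3' hind
end

section
/- Let p be a prime, G a finite group, H a subgroup of G, and P a Sylow p-subgroup of H such that the fusion systems F_P(H) and F_P(G) are equal. Then for every subgroup Q of P, the set T_G(Q,H) = { g ∈ G : g⁻¹Qg ≤ H } equals the product of subsets N_G(Q)·H. -/
open Pointwise

/-- Equality of the fusion systems `F_P(H)` and `F_P(G)` for `P ≤ H ≤ G`: every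
`G`-conjugation between subgroups of `P` is realized by conjugation by an element
of `H`. -/
def FusionSystemsEq {G : Type*} [Group G] (H P : Subgroup G) : Prop :=
  ∀ Q : Subgroup G, Q ≤ P → ∀ g : G, (∀ x ∈ Q, g * x * g⁻¹ ∈ P) →
    ∃ h ∈ H, ∀ x ∈ Q, g * x * g⁻¹ = h * x * h⁻¹

lemma conj_into_sylow (p : ℕ) [Fact p.Prime] {G : Type*} [Group G] [Finite G]
    {H P : Subgroup G} (hsyl : IsSylowIn p H P)
    {R : Subgroup G} (hRH : R ≤ H) (hRp : IsPGroup p R) :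
    ∃ h ∈ H, ∀ x ∈ R, h * x * h⁻¹ ∈ P := by
  obtain ⟨hPH, hPp, hmax⟩ := hsyl
  have hPp' : IsPGroup p (P.subgroupOf H) :=
    hPp.comap_of_injective H.subtype H.subtype_injective
  let S : Sylow p H :=
    { toSubgroup := P.subgroupOf H
      isPGroup' := hPp'
      is_maximal' := by
        intro R' hR' hle
        have h1 : R'.map H.subtype ≤ H := Subgroup.map_subtype_le R'
        have h2 : IsPGroup p (R'.map H.subtype) := hR'.map _
        have h3 : P ≤ R'.map H.subtype := by
          intro x hx
          exact ⟨⟨x, hPH hx⟩, hle (by simpa [Subgroup.mem_subgroupOf] using hx), rfl⟩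
        have h4 := hmax _ h1 h2 h3
        apply Subgroup.map_injective H.subtype_injective
        rw [h4, Subgroup.subgroupOf_map_subtype, inf_eq_left.mpr hPH] }
  have hRp' : IsPGroup p (R.subgroupOf H) :=
    hRp.comap_of_injective H.subtype H.subtype_injective
  obtain ⟨T, hT⟩ := hRp'.exists_le_sylow
  obtain ⟨h, hh⟩ := MulAction.exists_smul_eq H T S
  refine ⟨h.1, h.2, fun x hx => ?_⟩
  have hx' : (⟨x, hRH hx⟩ : H) ∈ T := hT (by simpa [Subgroup.mem_subgroupOf] using hx)
  have key : MulAut.conj h • (T : Subgroup H) = P.subgroupOf H := by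
    have h5 := congrArg Sylow.toSubgroup hh
    rwa [Sylow.smul_def, Sylow.pointwise_smul_def] at h5
  have hm : MulAut.conj h • (⟨x, hRH hx⟩ : H) ∈ MulAut.conj h • (T : Subgroup H) :=
    Subgroup.smul_mem_pointwise_smul _ _ _ hx'
  rw [key] at hm
  simpa [Subgroup.mem_subgroupOf] using hm

theorem statement4 (p : ℕ) [Fact p.Prime] (G : Type*) [Group G] [Finite G]
    (H P : Subgroup G) (hsyl : IsSylowIn p H P) (hfus : FusionSystemsEq H P)
    (Q : Subgroup G) (hQ : Q ≤ P) :
    {g : G | ∀ x ∈ Q, g⁻¹ * x * g ∈ H} = (Subgroup.normalizer (Q : Set G) : Set G) * (H : Set G) := by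
  obtain ⟨hPH, hPp, hmax⟩ := hsyl
  ext g
  simp only [Set.mem_setOf_eq, Set.mem_mul]
  constructor
  · intro hg
    -- R := g⁻¹ • Q conjugate, a p-subgroup of H
    set R : Subgroup G := Q.map (MulAut.conj g⁻¹).toMonoidHom with hR
    have hRH : R ≤ H := by
      rintro _ ⟨x, hx, rfl⟩
      simpa [mul_assoc] using hg x hx
    have hRp : IsPGroup p R := ((hPp.to_le hQ).map _)
    obtain ⟨h, hhH, hh⟩ := conj_into_sylow p ⟨hPH, hPp, hmax⟩ hRH hRp
    -- u conjugates Q into P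
    set u := h * g⁻¹ with hu
    have hconj : ∀ x ∈ Q, u * x * u⁻¹ ∈ P := by
      intro x hx
      have := hh _ ⟨x, hx, rfl⟩
      simpa [hu, mul_assoc] using this
    obtain ⟨k, hkH, hk⟩ := hfus Q hQ u hconj
    set n := k⁻¹ * u with hn
    have hcent : ∀ x ∈ Q, n * x * n⁻¹ = x := by
      intro x hx
      have h6 : n * x * n⁻¹ = k⁻¹ * (u * x * u⁻¹) * k := by rw [hn]; group
      rw [h6, hk x hx]; group
    have hnN : n ∈ Subgroup.normalizer (Q : Set G) := by
      intro x
      constructor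
      · intro hx
        have := hcent x hx
        rw [this]; exact hx
      · intro hx
        have h2 := hcent _ hx
        have : x = n * x * n⁻¹ := by
          have := congrArg (fun y => n⁻¹ * y * n) h2
          simpa [mul_assoc] using this.symm
        rw [this]; exact hx
    refine ⟨n⁻¹, inv_mem hnN, k⁻¹ * h, mul_mem (inv_mem hkH) hhH, ?_⟩
    rw [hn, hu]
    group
  · rintro ⟨a, haN, b, hbH, rfl⟩
    intro x hx
    have hx' : a⁻¹ * x * a ∈ Q := by
      have := (Subgroup.mem_normalizer_iff.mp haN (a⁻¹ * x * a)).mpr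
      apply this
      simpa [mul_assoc] using hx
    have : (a * b)⁻¹ * x * (a * b) = b⁻¹ * (a⁻¹ * x * a) * b := by group
    rw [this]
    exact mul_mem (mul_mem (inv_mem hbH) (hPH (hQ hx'))) hbH
end

section
/- Let p be a prime, G a finite group, H a subgroup of G, and P a Sylow p-subgroup of H such that the fusion systems F_P(H) and F_P(G) are equal. Let R be a subgroup of P such that C_G(R) is a p-group. Then the index |N_G(R) : N_H(R)| of N_H(R) = N_G(R) ∩ H in N_G(R) is a power of p. -/
open Pointwise

/-- The centralizer of (the carrier of) a subgroup is contained in its normalizer. -/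
lemma centralizer_le_normalizer' {G : Type*} [Group G] (R : Subgroup G) :
    Subgroup.centralizer (R : Set G) ≤ Subgroup.normalizer (R : Set G) := by
  intro c hc
  rw [Subgroup.mem_centralizer_iff] at hc
  rw [Subgroup.mem_normalizer_iff]
  intro x
  constructor
  · intro hx
    have : x * c = c * x := hc x hx
    have : c * x * c⁻¹ = x := by
      rw [← this]; group
    rwa [this]
  · intro hx
    have h1 : (c * x * c⁻¹) * c = c * (c * x * c⁻¹) := hc _ hx
    have : c * x * c⁻¹ = x := by
      have h2 : x * c⁻¹ = c * x * c⁻¹ * c⁻¹ := by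
        apply mul_left_cancel (a := c)
        calc c * (x * c⁻¹) = (c * x * c⁻¹) * c * c⁻¹ := by group
        _ = (c * (c * x * c⁻¹)) * c⁻¹ := by rw [h1]
        _ = c * (c * x * c⁻¹ * c⁻¹) := by group
      have h3 : x = c * x * c⁻¹ := by
        apply mul_right_cancel (b := c⁻¹)
        exact h2
      exact h3.symm
    rwa [← this]

theorem statement6 (p : ℕ) [Fact p.Prime] (G : Type*) [Group G] [Finite G]
    (H P : Subgroup G) (hsyl : IsSylowIn p H P) (hfus : FusionSystemsEq H P)
    (R : Subgroup G) (hR : R ≤ P) (hcent : IsPGroup p (Subgroup.centralizer (R : Set G))) :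
    ∃ n : ℕ, (Subgroup.normalizer (R : Set G) ⊓ H).relIndex (Subgroup.normalizer (R : Set G)) = p ^ n := by
  classical
  set N := Subgroup.normalizer (R : Set G) with hN
  set A := N ⊓ H with hA
  set C := Subgroup.centralizer (R : Set G) with hC
  have hCN : C ≤ N := centralizer_le_normalizer' R
  have hAN : A ≤ N := inf_le_left
  -- factorization : every element of N is (element of C) * (element of A)
  have hfact : ∀ n ∈ N, ∃ c ∈ C, ∃ a ∈ A, n = c * a := by
    intro n hn
    have hconj : ∀ x ∈ R, n * x * n⁻¹ ∈ P := fun x hx =>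
      hR ((Subgroup.mem_normalizer_iff.mp hn x).mp hx)
    obtain ⟨h, hhH, heq⟩ := hfus R hR n hconj
    -- h⁻¹ * n centralizes R
    have hd : h⁻¹ * n ∈ C := by
      rw [Subgroup.mem_centralizer_iff]
      intro x hx
      have := heq x hx
      -- n x n⁻¹ = h x h⁻¹ ⇒ x * (h⁻¹ n) = (h⁻¹ n) * x
      have key : (h⁻¹ * n) * x * (h⁻¹ * n)⁻¹ = x := by
        have : h⁻¹ * (n * x * n⁻¹) * h = x := by rw [this]; group
        calc (h⁻¹ * n) * x * (h⁻¹ * n)⁻¹ = h⁻¹ * (n * x * n⁻¹) * h := by group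
        _ = x := this
      calc x * (h⁻¹ * n) = ((h⁻¹ * n) * x * (h⁻¹ * n)⁻¹) * (h⁻¹ * n) := by rw [key]
      _ = (h⁻¹ * n) * x := by group
    have hhN : h ∈ N := by
      have : h = n * (h⁻¹ * n)⁻¹ := by group
      rw [this]
      exact mul_mem hn (inv_mem (hCN hd))
    have hhA : h ∈ A := ⟨hhN, hhH⟩
    refine ⟨n * h⁻¹, ?_, h, hhA, by group⟩
    rw [Subgroup.mem_centralizer_iff]
    intro x hx
    -- y := h⁻¹ x h ∈ R, and  (n h⁻¹) x (n h⁻¹)⁻¹ = n y n⁻¹ = h y h⁻¹ = x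
    have hy : h⁻¹ * x * h ∈ R := by
      have := (Subgroup.mem_normalizer_iff.mp (inv_mem hhN) x).mp hx
      rwa [inv_inv] at this
    have := heq _ hy
    have key : (n * h⁻¹) * x * (n * h⁻¹)⁻¹ = x := by
      calc (n * h⁻¹) * x * (n * h⁻¹)⁻¹ = n * (h⁻¹ * x * h) * n⁻¹ := by group
      _ = h * (h⁻¹ * x * h) * h⁻¹ := this
      _ = x := by group
    calc x * (n * h⁻¹) = ((n * h⁻¹) * x * (n * h⁻¹)⁻¹) * (n * h⁻¹) := by rw [key]
    _ = (n * h⁻¹) * x := by group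
  -- bijection between coset spaces  C ⧸ (A ⊓ C)  and  N ⧸ A
  have hbij : Nat.card (↥C ⧸ A.subgroupOf C) = Nat.card (↥N ⧸ A.subgroupOf N) := by
    apply Nat.card_congr
    refine Equiv.ofBijective
      (Quotient.map' (fun c : C => (⟨(c : G), hCN c.2⟩ : N)) ?_) ⟨?_, ?_⟩
    · intro a b hab
      rw [QuotientGroup.leftRel_apply] at hab ⊢
      rw [Subgroup.mem_subgroupOf] at hab ⊢
      exact hab
    · intro x y
      induction x using Quotient.inductionOn'
      induction y using Quotient.inductionOn'
      intro hxy
      rw [Quotient.map'_mk'', Quotient.map'_mk''] at hxy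
      rw [Quotient.eq''] at hxy ⊢
      rw [QuotientGroup.leftRel_apply] at hxy ⊢
      rw [Subgroup.mem_subgroupOf] at hxy ⊢
      exact hxy
    · intro x
      induction x using Quotient.inductionOn' with
      | h n =>
        obtain ⟨c, hc, a, ha, hn⟩ := hfact (n : G) n.2
        refine ⟨Quotient.mk'' ⟨c, hc⟩, ?_⟩
        rw [Quotient.map'_mk'']
        rw [Quotient.eq'']
        rw [QuotientGroup.leftRel_apply, Subgroup.mem_subgroupOf]
        show c⁻¹ * (n : G) ∈ A
        rw [hn]
        simpa using ha
  -- conclude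
  have hrel : A.relIndex N = A.relIndex C := by
    unfold Subgroup.relIndex Subgroup.index
    exact hbij.symm
  obtain ⟨m, hm⟩ := IsPGroup.iff_card.mp hcent
  have hdvd : A.relIndex N ∣ p ^ m := by
    rw [hrel, ← hm]
    exact Subgroup.index_dvd_card (A.subgroupOf C)
  obtain ⟨n, _, hn⟩ := (Nat.dvd_prime_pow (Fact.out : p.Prime)).mp hdvd
  exact ⟨n, hn⟩
end

section
/- Let p be a prime, k an algebraically closed field of characteristic p, G a finite group, H a subgroup of G, and P a Sylow p-subgroup of H such that the fusion systems F_P(H) and F_P(G) are equal. Suppose there exists a normal p-subgroup N of G such that C_G(N ∩ H) is a p-group. Then the permutation kG-module k[G/H] (that is, Ind_H^G(k)) is indecomposable (equivalently, the Scott module Sc(G,P) equals Ind_H^G(k)). -/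
open Pointwise

universe u v w



theorem pgroup_exists_fixed_vector (p : ℕ) [Fact p.Prime] (k : Type v) [Field k] [CharP k p] :
    ∀ (n : ℕ) (Γ : Type u) (_ : Group Γ) (_ : Finite Γ), Nat.card Γ ≤ n → IsPGroup p Γ →
    ∀ (V : Type w) (_ : AddCommGroup V) (_ : Module k V) (ρ : Representation k Γ V)
      (v0 : V), v0 ≠ 0 → ∃ v : V, v ≠ 0 ∧ ∀ γ : Γ, ρ γ v = v := by
  intro n
  induction n with
  | zero =>
    intro Γ _ _ hcard _
    exfalso
    have : 0 < Nat.card Γ := Nat.card_pos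
    omega
  | succ n IH =>
    intro Γ _ _ hcard hΓ V _ _ ρ v0 hv0
    rcases subsingleton_or_nontrivial Γ with hs | hnt
    · exact ⟨v0, hv0, fun γ => by rw [Subsingleton.elim γ 1, map_one]; rfl⟩
    · have hcnt : Nontrivial (Subgroup.center Γ) := hΓ.center_nontrivial
      obtain ⟨⟨z, hz⟩, hzne⟩ := exists_ne (1 : Subgroup.center Γ)
      have hz1 : z ≠ 1 := fun h => hzne (Subtype.ext h)
      set B : Module.End k V := ρ z - 1 with hB
      have hNV : Nontrivial V := nontrivial_of_ne v0 0 hv0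
      have hinj : Function.Injective (algebraMap k (Module.End k V)) := by
        intro a b hab
        have h2 := congrArg (fun f : Module.End k V => f v0) hab
        simp only [Module.algebraMap_end_apply] at h2
        by_contra hne
        have h3 : (a - b) • v0 = 0 := by rw [sub_smul, h2, sub_self]
        rcases smul_eq_zero.mp h3 with h | h
        · exact hne (sub_eq_zero.mp h)
        · exact hv0 h
      haveI : CharP (Module.End k V) p := charP_of_injective_algebraMap hinj p
      obtain ⟨m, hm⟩ := hΓ z
      have hBpow : B ^ p ^ m = 0 := by
        rw [hB, sub_pow_char_pow_of_commute p m (Commute.one_right _)]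
        rw [one_pow, ← map_pow, hm, map_one, sub_self]
      have hex : ∃ j, (B ^ j) v0 = 0 := ⟨p ^ m, by rw [hBpow]; rfl⟩
      classical
      have hj0 : Nat.find hex ≠ 0 := by
        intro h
        have h1 := Nat.find_spec hex
        rw [h, pow_zero] at h1
        exact hv0 h1
      set v1 : V := (B ^ (Nat.find hex - 1)) v0 with hv1def
      have hv1 : v1 ≠ 0 := Nat.find_min hex (by omega)
      have hBv1 : B v1 = 0 := by
        have h1 : (B ^ Nat.find hex) v0 = 0 := Nat.find_spec hex
        have hcomp : B ((B ^ (Nat.find hex - 1)) v0) = (B ^ Nat.find hex) v0 := by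
          rw [← Module.End.mul_apply, ← pow_succ']
          congr 2
          omega
        rw [hv1def, hcomp, h1]
      -- the fixed space of z
      set V' : Submodule k V := LinearMap.ker B with hV'
      have hmemV' : ∀ w : V, w ∈ V' ↔ ρ z w = w := by
        intro w
        simp [hV', hB, LinearMap.mem_ker, LinearMap.sub_apply, sub_eq_zero]
      have hv1V' : v1 ∈ V' := by rw [LinearMap.mem_ker]; exact hBv1
      -- V' is Γ-stable since z is central
      have hstab : ∀ (γ : Γ) (w : V), w ∈ V' → ρ γ w ∈ V' := by
        intro γ w hw
        rw [hmemV'] at hw ⊢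
        have hcomm : z * γ = γ * z := ((Subgroup.mem_center_iff.mp hz) γ).symm
        calc ρ z (ρ γ w) = ρ (z * γ) w := by rw [map_mul]; rfl
        _ = ρ (γ * z) w := by rw [hcomm]
        _ = ρ γ (ρ z w) := by rw [map_mul]; rfl
        _ = ρ γ w := by rw [hw]
      -- restricted representation on V'
      let ρ' : Representation k Γ V' :=
        { toFun := fun γ => (ρ γ).restrict (hstab γ)
          map_one' := by
            ext w
            simp [LinearMap.restrict_apply]
          map_mul' := by
            intro a b
            ext w
            simp [LinearMap.restrict_apply, map_mul] }
      have hρ'apply : ∀ (γ : Γ) (w : V'), ((ρ' γ) w : V) = ρ γ (w : V) := by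
        intro γ w
        rfl
      -- quotient by ⟨z⟩
      set Z : Subgroup Γ := Subgroup.zpowers z with hZ
      haveI hZnorm : Z.Normal := by
        constructor
        intro a ha g
        have haz : a ∈ Subgroup.center Γ := by
          obtain ⟨n', rfl⟩ := Subgroup.mem_zpowers_iff.mp ha
          exact Subgroup.zpow_mem _ hz n'
        have hc : g * a = a * g := Subgroup.mem_center_iff.mp haz g
        have : g * a * g⁻¹ = a := by rw [hc]; group
        rw [this]; exact ha
      have hρ'z : ρ' z = 1 := by
        ext w
        have := (hmemV' (w : V)).mp w.2
        simpa [hρ'apply] using this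
      have hker : ∀ x ∈ Z, ρ' x = 1 := by
        intro x hx
        have hfin : x ∈ Submonoid.powers z := by
          have : (Submonoid.powers z : Set Γ) = Subgroup.zpowers z := powers_eq_zpowers z
          rw [← SetLike.mem_coe, this]
          exact hx
        obtain ⟨n', rfl⟩ := hfin
        rw [map_pow, hρ'z, one_pow]
      -- build the representation of the quotient
      let ρQfun : Γ ⧸ Z → Module.End k V' := fun q =>
        Quotient.liftOn' q ρ' (by
          intro a b hab
          have hab' : a⁻¹ * b ∈ Z := QuotientGroup.leftRel_apply.mp hab
          have : ρ' b = ρ' a * ρ' (a⁻¹ * b) := by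
            rw [← map_mul]
            congr 1
            group
          rw [this, hker _ hab', mul_one])
      have hρQmk : ∀ γ : Γ, ρQfun (QuotientGroup.mk γ) = ρ' γ := fun γ => rfl
      let ρQ : Representation k (Γ ⧸ Z) V' :=
        { toFun := ρQfun
          map_one' := by
            have : (1 : Γ ⧸ Z) = QuotientGroup.mk 1 := rfl
            rw [this, hρQmk, map_one]
          map_mul' := by
            intro a b
            induction a using QuotientGroup.induction_on with
            | H a =>
            induction b using QuotientGroup.induction_on with
            | H b =>
            show ρQfun (QuotientGroup.mk (a * b)) = ρQfun (QuotientGroup.mk a) * ρQfun (QuotientGroup.mk b)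
            rw [hρQmk, hρQmk, hρQmk, map_mul] }
      -- cardinality drops
      have hZcard : 1 < Nat.card Z := by
        rw [Finite.one_lt_card_iff_nontrivial]
        exact ⟨⟨⟨z, Subgroup.mem_zpowers z⟩, 1, fun h => hz1 (by
          simpa using congrArg (Subtype.val) h)⟩⟩
      have hcardQ : Nat.card (Γ ⧸ Z) ≤ n := by
        have h1 : Nat.card Γ = Nat.card (Γ ⧸ Z) * Nat.card Z :=
          Subgroup.card_eq_card_quotient_mul_card_subgroup Z
        have h2 : 0 < Nat.card (Γ ⧸ Z) := Nat.card_pos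
        nlinarith [Nat.card_pos (α := Γ)]
      have hv1ne : (⟨v1, hv1V'⟩ : V') ≠ 0 := by
        intro h
        exact hv1 (by simpa using congrArg (Subtype.val) h)
      obtain ⟨v, hvne, hvfix⟩ := IH (Γ ⧸ Z) inferInstance inferInstance hcardQ
        (hΓ.to_quotient Z) V' inferInstance inferInstance ρQ ⟨v1, hv1V'⟩ hv1ne
      refine ⟨(v : V), fun h => hvne (Subtype.ext h), ?_⟩
      intro γ
      have := hvfix (QuotientGroup.mk γ)
      rw [show ρQ (QuotientGroup.mk γ) = ρ' γ from hρQmk γ] at this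
      calc ρ γ (v : V) = ((ρ' γ) v : V) := (hρ'apply γ v).symm
      _ = (v : V) := by rw [this]


theorem pgroup_exists_relative_fixed (p : ℕ) [Fact p.Prime] (k : Type v) [Field k] [CharP k p]
    (Γ : Type u) [Group Γ] [Finite Γ] (hΓ : IsPGroup p Γ)
    (V : Type w) [AddCommGroup V] [Module k V] (ρ : Representation k Γ V)
    (A A' : Submodule k V) (hle : A' ≤ A)
    (hA : ∀ (γ : Γ), ∀ v ∈ A, ρ γ v ∈ A)
    (hA' : ∀ (γ : Γ), ∀ v ∈ A', ρ γ v ∈ A')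
    (hne : ¬ A ≤ A') :
    ∃ v, v ∈ A ∧ v ∉ A' ∧ ∀ γ : Γ, ρ γ v - v ∈ A' := by
  classical
  set A'' : Submodule k A := A'.comap A.subtype with hA''
  have hmemA'' : ∀ x : A, x ∈ A'' ↔ (x : V) ∈ A' := fun x => Iff.rfl
  set Q := A ⧸ A'' with hQ
  let ρrel : Γ → (A →ₗ[k] A) := fun γ => (ρ γ).restrict (hA γ)
  have hρrel : ∀ (γ : Γ) (x : A), ((ρrel γ x : A) : V) = ρ γ (x : V) := fun γ x => rfl
  have hmapsto : ∀ γ : Γ, A'' ≤ A''.comap (ρrel γ) := by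
    intro γ x hx
    simp only [Submodule.mem_comap] at hx ⊢
    rw [hmemA''] at hx ⊢
    rw [hρrel]
    exact hA' γ _ hx
  let ρQ : Representation k Γ Q :=
    { toFun := fun γ => Submodule.mapQ A'' A'' (ρrel γ) (hmapsto γ)
      map_one' := by
        apply LinearMap.ext
        intro q
        obtain ⟨x, rfl⟩ := Submodule.Quotient.mk_surjective _ q
        rw [Submodule.mapQ_apply]
        congr 1
        apply Subtype.ext
        rw [hρrel, map_one]
        rfl
      map_mul' := by
        intro a b
        apply LinearMap.ext
        intro q
        obtain ⟨x, rfl⟩ := Submodule.Quotient.mk_surjective _ q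
        rw [Module.End.mul_apply, Submodule.mapQ_apply, Submodule.mapQ_apply,
          Submodule.mapQ_apply]
        congr 1
        apply Subtype.ext
        rw [hρrel, hρrel, hρrel, map_mul]
        rfl }
  obtain ⟨a, haA, haA'⟩ := SetLike.not_le_iff_exists.mp hne
  have hq0 : (Submodule.Quotient.mk (⟨a, haA⟩ : A) : Q) ≠ 0 := by
    rw [Ne, Submodule.Quotient.mk_eq_zero]
    exact haA'
  obtain ⟨v, hvne, hvfix⟩ := pgroup_exists_fixed_vector p k (Nat.card Γ) Γ inferInstance
    inferInstance le_rfl hΓ Q inferInstance inferInstance ρQ _ hq0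
  obtain ⟨x, rfl⟩ := Submodule.Quotient.mk_surjective _ v
  refine ⟨(x : V), x.2, ?_, ?_⟩
  · intro hx
    exact hvne (by rwa [Submodule.Quotient.mk_eq_zero])
  · intro γ
    have := hvfix γ
    have h2 : (Submodule.Quotient.mk (ρrel γ x) : Q) = Submodule.Quotient.mk x := by
      rw [← this]
      rfl
    rw [Submodule.Quotient.eq] at h2
    rw [hmemA''] at h2
    simpa [hρrel] using h2

namespace S7

variable {p : ℕ} [Fact p.Prime] {k : Type*} [Field k] [CharP k p]
variable {G : Type*} [Group G] [Finite G] {H : Subgroup G}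

/-- The representation of `G` on `k[G/H]`. -/
noncomputable abbrev rho (k : Type*) [Field k] (G : Type*) [Group G] (H : Subgroup G) :
    Representation k G ((G ⧸ H) →₀ k) where
  toFun g := Finsupp.lmapDomain k k (g • ·)
  map_one' := by ext; simp
  map_mul' x y := by ext; simp [mul_smul]

theorem rho_apply (k : Type*) [Field k] {G : Type*} [Group G] {H : Subgroup G} (g : G)
    (f : (G ⧸ H) →₀ k) (ω : G ⧸ H) : rho k G H g f ω = f (g⁻¹ • ω) := by
  show Finsupp.mapDomain (g • ·) f ω = _
  conv_lhs => rw [show ω = g • (g⁻¹ • ω) by rw [smul_smul, mul_inv_cancel, one_smul]]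
  exact Finsupp.mapDomain_apply (MulAction.injective g) f _

theorem rho_single (k : Type*) [Field k] {G : Type*} [Group G] {H : Subgroup G} (g : G)
    (x : G ⧸ H) (r : k) : rho k G H g (Finsupp.single x r) = Finsupp.single (g • x) r :=
  Finsupp.mapDomain_single

/-- Identification of the permutation module with the Finsupp model. -/
noncomputable def eqv (k : Type*) [Field k] (G : Type*) [Group G] (H : Subgroup G) :
    PermutationModule k G (G ⧸ H) ≃+ ((G ⧸ H) →₀ k) :=
  ((Representation.ofMulAction k G (G ⧸ H)).asModuleEquiv.trans
    (MonoidAlgebra.coeffLinearEquiv k)).toAddEquiv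

theorem eqv_symm_map_smul (k : Type*) [Field k] {G : Type*} [Group G] {H : Subgroup G} (c : k)
    (v : (G ⧸ H) →₀ k) :
    (eqv k G H).symm (c • v) = algebraMap k (MonoidAlgebra k G) c • (eqv k G H).symm v := by
  show (Representation.ofMulAction k G (G ⧸ H)).asModuleEquiv.symm
    ((MonoidAlgebra.coeffLinearEquiv k).symm (c • v)) = _
  rw [LinearEquiv.map_smul, Representation.asModuleEquiv_symm_map_smul]
  rfl

theorem eqv_symm_map_rho (k : Type*) [Field k] {G : Type*} [Group G] {H : Subgroup G} (g : G)
    (v : (G ⧸ H) →₀ k) :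
    (eqv k G H).symm (rho k G H g v) = MonoidAlgebra.of k G g • (eqv k G H).symm v := by
  show (Representation.ofMulAction k G (G ⧸ H)).asModuleEquiv.symm
    ((MonoidAlgebra.coeffLinearEquiv k).symm (rho k G H g v)) = _
  rw [show (MonoidAlgebra.coeffLinearEquiv k).symm (rho k G H g v) =
    Representation.ofMulAction k G (G ⧸ H) g ((MonoidAlgebra.coeffLinearEquiv k).symm v) by
      rw [Representation.ofMulAction_def]; simp,
    Representation.asModuleEquiv_symm_map_rho]
  rfl

/-- `S`-fixed vectors in `k[G/H]`. -/
def FixS (k : Type*) [Field k] {G : Type*} [Group G] (H : Subgroup G) (S : Subgroup G) :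
    Submodule k ((G ⧸ H) →₀ k) where
  carrier := {v | ∀ s ∈ S, rho k G H s v = v}
  zero_mem' := fun s _ => map_zero _
  add_mem' := by
    intro a b ha hb s hs
    rw [map_add, ha s hs, hb s hs]
  smul_mem' := by
    intro c v hv s hs
    rw [map_smul, hv s hs]

/-- Vectors of `k[G/H]` vanishing at every `S`-fixed point of `G/H`. -/
def ZerS (k : Type*) [Field k] {G : Type*} [Group G] (H : Subgroup G) (S : Subgroup G) :
    Submodule k ((G ⧸ H) →₀ k) where
  carrier := {v | ∀ ω : G ⧸ H, (∀ s ∈ S, s • ω = ω) → v ω = 0}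
  zero_mem' := fun ω _ => rfl
  add_mem' := by
    intro a b ha hb ω hω
    rw [Finsupp.add_apply, ha ω hω, hb ω hω, add_zero]
  smul_mem' := by
    intro c v hv ω hω
    rw [Finsupp.smul_apply, hv ω hω, smul_zero]

/-- Transport of a `MonoidAlgebra k G`-submodule of the permutation module to a
`k`-submodule of the Finsupp model. -/
def toSub (U : Submodule (MonoidAlgebra k G) (PermutationModule k G (G ⧸ H))) :
    Submodule k ((G ⧸ H) →₀ k) where
  carrier := {v | (eqv k G H).symm v ∈ U}
  zero_mem' := by simp only [Set.mem_setOf_eq, map_zero]; exact U.zero_mem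
  add_mem' := by
    intro a b ha hb
    simp only [Set.mem_setOf_eq, map_add] at *
    exact U.add_mem ha hb
  smul_mem' := by
    intro c v hv
    simp only [Set.mem_setOf_eq] at *
    rw [eqv_symm_map_smul]
    exact U.smul_mem _ hv

theorem mem_toSub {U : Submodule (MonoidAlgebra k G) (PermutationModule k G (G ⧸ H))}
    {v : (G ⧸ H) →₀ k} : v ∈ toSub U ↔ (eqv k G H).symm v ∈ U := Iff.rfl

theorem toSub_stable (U : Submodule (MonoidAlgebra k G) (PermutationModule k G (G ⧸ H)))
    (g : G) {v : (G ⧸ H) →₀ k} (hv : v ∈ toSub U) : rho k G H g v ∈ toSub U := by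
  rw [mem_toSub] at *
  rw [eqv_symm_map_rho]
  exact U.smul_mem _ hv

theorem toSub_eq_bot {U : Submodule (MonoidAlgebra k G) (PermutationModule k G (G ⧸ H))}
    (h : toSub U = ⊥) : U = ⊥ := by
  rw [eq_bot_iff]
  intro u hu
  have h1 : (eqv k G H) u ∈ toSub U := by
    rw [mem_toSub, AddEquiv.symm_apply_apply]
    exact hu
  rw [h, Submodule.mem_bot] at h1
  have : u = (eqv k G H).symm 0 := by
    rw [← h1, AddEquiv.symm_apply_apply]
  rw [Submodule.mem_bot, this, map_zero]

theorem toSub_isCompl {U W : Submodule (MonoidAlgebra k G) (PermutationModule k G (G ⧸ H))}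
    (h : IsCompl U W) : IsCompl (toSub U) (toSub W) := by
  constructor
  · rw [disjoint_iff_inf_le]
    intro v ⟨hvU, hvW⟩
    have : (eqv k G H).symm v ∈ U ⊓ W := ⟨hvU, hvW⟩
    rw [h.inf_eq_bot, Submodule.mem_bot] at this
    have h0 : v = (eqv k G H) 0 := by
      rw [← this, AddEquiv.apply_symm_apply]
    rw [Submodule.mem_bot, h0, map_zero]
  · rw [codisjoint_iff_le_sup]
    intro v _
    have : (eqv k G H).symm v ∈ U ⊔ W := by
      rw [h.sup_eq_top]; trivial
    obtain ⟨a, ha, b, hb, hab⟩ := Submodule.mem_sup.mp this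
    have hv : v = (eqv k G H) a + (eqv k G H) b := by
      apply (eqv k G H).symm.injective
      rw [map_add]
      simp only [AddEquiv.symm_apply_apply]
      exact hab.symm
    rw [hv]
    apply Submodule.add_mem_sup
    · rw [mem_toSub, AddEquiv.symm_apply_apply]; exact ha
    · rw [mem_toSub, AddEquiv.symm_apply_apply]; exact hb

end S7

namespace S7

variable {p : ℕ} [Fact p.Prime]
variable {G : Type*} [Group G] [Finite G] {H P N : Subgroup G}

theorem smul_mk_eq_iff (g r : G) :
    r • (QuotientGroup.mk g : G ⧸ H) = QuotientGroup.mk g ↔ g⁻¹ * r * g ∈ H := by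
  rw [MulAction.Quotient.smul_mk, smul_eq_mul, eq_comm, QuotientGroup.eq, ← mul_assoc]

theorem R_le_P (hsyl : IsSylowIn p H P) (hNnorm : N.Normal) (hNp : IsPGroup p N) :
    N ⊓ H ≤ P := by
  obtain ⟨hPH, hPp, hPmax⟩ := hsyl
  have hRp : IsPGroup p (N ⊓ H : Subgroup G) := hNp.to_le inf_le_left
  have hPnorm : P ≤ Subgroup.normalizer ((N ⊓ H : Subgroup G) : Set G) := by
    intro x hx
    rw [Subgroup.mem_normalizer_iff]
    intro y
    constructor
    · rintro ⟨hyN, hyH⟩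
      exact ⟨hNnorm.conj_mem y hyN x, Subgroup.mul_mem _ (Subgroup.mul_mem _ (hPH hx) hyH)
        (Subgroup.inv_mem _ (hPH hx))⟩
    · rintro ⟨hyN, hyH⟩
      have h1 : x⁻¹ * (x * y * x⁻¹) * x = y := by group
      constructor
      · have := hNnorm.conj_mem _ hyN x⁻¹
        rwa [inv_inv, h1] at this
      · have := Subgroup.mul_mem _ (Subgroup.mul_mem _ (Subgroup.inv_mem _ (hPH hx)) hyH)
          (hPH hx)
        rwa [h1] at this
  have hsup : IsPGroup p (P ⊔ (N ⊓ H) : Subgroup G) :=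
    hPp.to_sup_of_normal_right' hRp hPnorm
  have heq : (P ⊔ (N ⊓ H) : Subgroup G) = P :=
    hPmax _ (sup_le hPH inf_le_right) hsup le_sup_left
  rw [← heq]
  exact le_sup_right

theorem fixed_pt_eq_smul_base (hfus : FusionSystemsEq H P) (hRP : N ⊓ H ≤ P)
    (hNnorm : N.Normal) (ω : G ⧸ H) (hω : ∀ r ∈ N ⊓ H, r • ω = ω) :
    ∃ c ∈ Subgroup.centralizer ((N ⊓ H : Subgroup G) : Set G),
      ω = c • (QuotientGroup.mk (1 : G) : G ⧸ H) := by
  obtain ⟨g, rfl⟩ := QuotientGroup.mk_surjective ω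
  have hconj : ∀ x ∈ N ⊓ H, g⁻¹ * x * g⁻¹⁻¹ ∈ P := by
    intro x hx
    rw [inv_inv]
    apply hRP
    rw [Subgroup.mem_inf]
    refine ⟨?_, ?_⟩
    · have := hNnorm.conj_mem x hx.1 g⁻¹
      rwa [inv_inv] at this
    · rw [← smul_mk_eq_iff (H := H)]
      exact hω x hx
  obtain ⟨h, hh, heq⟩ := hfus (N ⊓ H) hRP g⁻¹ hconj
  have hc : (g * h) ∈ Subgroup.centralizer ((N ⊓ H : Subgroup G) : Set G) := by
    rw [Subgroup.mem_centralizer_iff]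
    intro b hb
    have key : g⁻¹ * b * g = h * b * h⁻¹ := by
      have := heq b hb
      rwa [inv_inv] at this
    have e1 : b * g = g * h * b * h⁻¹ := by
      have : g * (g⁻¹ * b * g) = g * (h * b * h⁻¹) := by rw [key]
      calc b * g = g * (g⁻¹ * b * g) := by group
      _ = g * (h * b * h⁻¹) := this
      _ = g * h * b * h⁻¹ := by group
    calc b * (g * h) = b * g * h := by group
    _ = g * h * b * h⁻¹ * h := by rw [e1]
    _ = g * h * b := by group
  refine ⟨g * h, hc, ?_⟩
  have : (g * h) • (QuotientGroup.mk (1 : G) : G ⧸ H) = QuotientGroup.mk (g * h) := by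
    rw [MulAction.Quotient.smul_mk, smul_eq_mul, mul_one]
  rw [this, QuotientGroup.eq]
  simpa using Subgroup.inv_mem _ hh

theorem smul_base_fixed {c : G} (hc : c ∈ Subgroup.centralizer ((N ⊓ H : Subgroup G) : Set G))
    {r : G} (hr : r ∈ N ⊓ H) :
    r • (c • (QuotientGroup.mk (1 : G) : G ⧸ H)) = c • (QuotientGroup.mk (1 : G) : G ⧸ H) := by
  have h1 : c • (QuotientGroup.mk (1 : G) : G ⧸ H) = QuotientGroup.mk c := by
    rw [MulAction.Quotient.smul_mk, smul_eq_mul, mul_one]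
  rw [h1, smul_mk_eq_iff]
  have h2 : r * c = c * r := Subgroup.mem_centralizer_iff.mp hc r hr
  have : c⁻¹ * r * c = r := by
    rw [mul_assoc, h2, ← mul_assoc, inv_mul_cancel, one_mul]
  rw [this]
  exact hr.2

theorem base_fixed {r : G} (hr : r ∈ N ⊓ H) :
    r • (QuotientGroup.mk (1 : G) : G ⧸ H) = QuotientGroup.mk (1 : G) := by
  rw [smul_mk_eq_iff]
  simpa using hr.2

end S7

namespace S7

variable {p : ℕ} [Fact p.Prime] {k : Type*} [Field k] [CharP k p]
variable {G : Type*} [Group G] [Finite G] {H : Subgroup G}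

theorem proj_zer (S : Subgroup G) (hSp : IsPGroup p S)
    (π : ((G ⧸ H) →₀ k) →ₗ[k] ((G ⧸ H) →₀ k))
    (hπ : ∀ (g : G) (v : (G ⧸ H) →₀ k), π (rho k G H g v) = rho k G H g (π v)) :
    ∀ (n : ℕ) (v : (G ⧸ H) →₀ k), v.support.card ≤ n →
      v ∈ FixS k H S → v ∈ ZerS k H S → π v ∈ ZerS k H S := by
  classical
  haveI : Fintype (G ⧸ H) := Fintype.ofFinite _
  haveI : Fintype S := Fintype.ofFinite _
  intro n
  induction n with
  | zero =>
    intro v hcard _ _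
    have h0 : v.support = ∅ := Finset.card_eq_zero.mp (Nat.le_zero.mp hcard)
    have : v = 0 := Finsupp.support_eq_empty.mp h0
    rw [this, map_zero]
    exact (ZerS k H S).zero_mem
  | succ n IH =>
    intro v hcard hvF hvZ
    by_cases hsmall : v.support.card ≤ n
    · exact IH v hsmall hvF hvZ
    have hpos : 0 < v.support.card := by omega
    obtain ⟨lam, hlam⟩ := Finset.card_pos.mp hpos
    have hvlam : v lam ≠ 0 := Finsupp.mem_support_iff.mp hlam
    have hlamnf : ¬ (∀ s ∈ S, s • lam = lam) := fun hf => hvlam (hvZ lam hf)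
    set O : Set (G ⧸ H) := MulAction.orbit S lam with hO
    set OF : Finset (G ⧸ H) := O.toFinset with hOF
    have hmemOF : ∀ ω, ω ∈ OF ↔ ∃ s : S, s • lam = ω := by
      intro ω
      rw [hOF, Set.mem_toFinset]
      exact MulAction.mem_orbit_iff
    have hlamOF : lam ∈ OF := by
      rw [hmemOF]
      exact ⟨1, one_smul _ _⟩
    -- a fixed point is never in the orbit
    have hfix_notin : ∀ μ, (∀ s ∈ S, s • μ = μ) → μ ∉ OF := by
      intro μ hμ hmem
      obtain ⟨⟨s, hs⟩, hsl⟩ := (hmemOF μ).mp hmem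
      apply hlamnf
      intro t ht
      have h1 : lam = μ := by
        have h2 : s⁻¹ • μ = μ := hμ s⁻¹ (Subgroup.inv_mem _ hs)
        calc lam = s⁻¹ • s • lam := by rw [smul_smul, inv_mul_cancel, one_smul]
        _ = s⁻¹ • μ := by rw [show s • lam = μ from hsl]
        _ = μ := h2
      rw [h1]
      exact hμ t ht
    -- the orbit sum
    set σ : (G ⧸ H) →₀ k := ∑ ω ∈ OF, Finsupp.single ω (1 : k) with hσ
    have hσapply : ∀ ω', σ ω' = if ω' ∈ OF then (1 : k) else 0 := by
      intro ω'
      rw [hσ, Finsupp.finset_sum_apply]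
      rw [Finset.sum_congr rfl (fun x _ => Finsupp.single_apply)]
      exact Finset.sum_ite_eq' OF ω' (fun _ => (1 : k))
    -- orbit is closed under the action
    have horbit_smul : ∀ (s : G), s ∈ S → ∀ ω', (s • ω' ∈ OF ↔ ω' ∈ OF) := by
      intro s hs ω'
      rw [hmemOF, hmemOF]
      constructor
      · rintro ⟨t, ht⟩
        refine ⟨(⟨s, hs⟩ : S)⁻¹ * t, ?_⟩
        rw [mul_smul, ht]
        show (s⁻¹ : G) • s • ω' = ω'
        rw [smul_smul, inv_mul_cancel, one_smul]
      · rintro ⟨t, ht⟩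
        exact ⟨⟨s, hs⟩ * t, by rw [mul_smul, ht]; rfl⟩
    have hσF : σ ∈ FixS k H S := by
      intro s hs
      apply Finsupp.ext
      intro ω'
      rw [rho_apply, hσapply, hσapply]
      congr 1
      rw [← horbit_smul s hs (s⁻¹ • ω'), smul_smul, mul_inv_cancel, one_smul]
    have hσZ : σ ∈ ZerS k H S := by
      intro ω' hω'
      rw [hσapply, if_neg (hfix_notin ω' hω')]
    -- v is constant on the orbit
    have hconst : ∀ ω' ∈ OF, v ω' = v lam := by
      intro ω' hω'
      obtain ⟨⟨s, hs⟩, hsl⟩ := (hmemOF ω').mp hω'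
      have h1 := hvF s hs
      have h2 : (rho k G H s v) (s • lam) = v lam := by
        rw [rho_apply, smul_smul, inv_mul_cancel, one_smul]
      rw [h1] at h2
      rw [← hsl]
      exact h2
    -- the reduced vector
    set v' : (G ⧸ H) →₀ k := v - v lam • σ with hv'
    have hv'apply : ∀ ω', v' ω' = v ω' - v lam * σ ω' := by
      intro ω'
      rw [hv', Finsupp.sub_apply, Finsupp.smul_apply, smul_eq_mul]
    have hv'F : v' ∈ FixS k H S := (FixS k H S).sub_mem hvF ((FixS k H S).smul_mem _ hσF)
    have hv'Z : v' ∈ ZerS k H S := (ZerS k H S).sub_mem hvZ ((ZerS k H S).smul_mem _ hσZ)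
    have hv'supp : v'.support = v.support \ OF := by
      apply Finset.ext
      intro ω'
      rw [Finsupp.mem_support_iff, Finset.mem_sdiff, Finsupp.mem_support_iff, hv'apply]
      by_cases hmem : ω' ∈ OF
      · rw [hσapply, if_pos hmem, mul_one, hconst ω' hmem, sub_self]
        simp [hmem]
      · rw [hσapply, if_neg hmem, mul_zero, sub_zero]
        simp [hmem]
    have hv'card : v'.support.card ≤ n := by
      have hss : v'.support ⊂ v.support := by
        rw [hv'supp]
        refine Finset.ssubset_iff_of_subset (Finset.sdiff_subset) |>.mpr ?_
        exact ⟨lam, hlam, by simp [hlamOF]⟩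
      have := Finset.card_lt_card hss
      omega
    have hπv' : π v' ∈ ZerS k H S := IH v' hv'card hv'F hv'Z
    -- π σ vanishes on fixed points since p divides the orbit size
    have hπσZ : π σ ∈ ZerS k H S := by
      intro μ hμ
      rw [hσ, map_sum, Finsupp.finset_sum_apply]
      have hterm : ∀ ω' ∈ OF, (π (Finsupp.single ω' (1 : k))) μ
          = (π (Finsupp.single lam (1 : k))) μ := by
        intro ω' hω'
        obtain ⟨⟨s, hs⟩, hsl⟩ := (hmemOF ω').mp hω'
        have h1 : Finsupp.single ω' (1 : k) = rho k G H s (Finsupp.single lam 1) := by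
          rw [rho_single]
          rw [← hsl]
          rfl
        rw [h1, hπ, rho_apply, hμ s⁻¹ (Subgroup.inv_mem _ hs)]
      rw [Finset.sum_congr rfl hterm, Finset.sum_const, nsmul_eq_mul]
      -- p divides the cardinality of the orbit
      have hcardO : OF.card = Fintype.card O := Set.toFinset_card O
      have hdvd : Fintype.card O ∣ Fintype.card S := by
        have := MulAction.card_orbit_mul_card_stabilizer_eq_card_group S lam
        exact ⟨_, this.symm⟩
      obtain ⟨m, hm⟩ := IsPGroup.iff_card.mp hSp
      rw [Nat.card_eq_fintype_card] at hm
      rw [hm] at hdvd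
      obtain ⟨j, hjle, hj⟩ := (Nat.dvd_prime_pow (Fact.out : p.Prime)).mp hdvd
      have hj0 : j ≠ 0 := by
        intro h
        rw [h, pow_zero] at hj
        obtain ⟨a, ha⟩ := Fintype.card_eq_one_iff.mp hj
        apply hlamnf
        intro s hs
        have h1 : (⟨s • lam, MulAction.mem_orbit lam (⟨s, hs⟩ : S)⟩ : O) = a := ha _
        have h2 : (⟨lam, MulAction.mem_orbit_self lam⟩ : O) = a := ha _
        have := h1.trans h2.symm
        exact congrArg Subtype.val this
      have hpdvd : p ∣ OF.card := by
        rw [hcardO, hj]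
        exact dvd_pow_self p hj0
      obtain ⟨c', hc'⟩ := hpdvd
      rw [hc']
      push_cast
      rw [CharP.cast_eq_zero k p]
      ring
    -- assemble
    have hdecomp : π v = π v' + v lam • π σ := by
      rw [hv', map_sub, map_smul]
      abel
    rw [hdecomp]
    exact (ZerS k H S).add_mem hπv' ((ZerS k H S).smul_mem _ hπσZ)

end S7

namespace S7

variable {p : ℕ} [Fact p.Prime] {k : Type*} [Field k] [CharP k p]
variable {G : Type*} [Group G] [Finite G] {H P N : Subgroup G}

theorem main (hsyl : IsSylowIn p H P) (hfus : FusionSystemsEq H P)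
    (hNnorm : N.Normal) (hNp : IsPGroup p N)
    (hCp : IsPGroup p (Subgroup.centralizer ((N ⊓ H : Subgroup G) : Set G)))
    (U W : Submodule (MonoidAlgebra k G) (PermutationModule k G (G ⧸ H)))
    (hUW : IsCompl U W) : U = ⊥ ∨ W = ⊥ := by
  classical
  set R : Subgroup G := N ⊓ H with hR
  set C : Subgroup G := Subgroup.centralizer (R : Set G) with hC
  have hRP : R ≤ P := R_le_P hsyl hNnorm hNp
  set x₀ : G ⧸ H := QuotientGroup.mk (1 : G) with hx₀
  -- final step: a complement piece with vanishing Brauer quotient at R is zero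
  have hfinal : ∀ (W' : Submodule (MonoidAlgebra k G) (PermutationModule k G (G ⧸ H))),
      toSub W' ⊓ FixS k H R ≤ ZerS k H R → W' = ⊥ := by
    intro W' hW'
    by_contra hne
    obtain ⟨m, hmW', hm0⟩ := Submodule.exists_mem_ne_zero_of_ne_bot hne
    have hA : ∀ (γ : N) (v : (G ⧸ H) →₀ k), v ∈ toSub W' →
        ((rho k G H).comp N.subtype) γ v ∈ toSub W' := by
      intro γ v hv
      exact toSub_stable W' (γ : G) hv
    have hnebot : ¬ toSub W' ≤ (⊥ : Submodule k ((G ⧸ H) →₀ k)) := by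
      intro hle
      apply hm0
      have h1 : (eqv k G H) m ∈ toSub W' := by
        rw [mem_toSub, AddEquiv.symm_apply_apply]
        exact hmW'
      have h2 := hle h1
      rw [Submodule.mem_bot] at h2
      have : m = (eqv k G H).symm 0 := by
        rw [← h2, AddEquiv.symm_apply_apply]
      rw [this, map_zero]
    obtain ⟨v, hvW', hv0, hvfix⟩ := pgroup_exists_relative_fixed p k N hNp
      ((G ⧸ H) →₀ k) ((rho k G H).comp N.subtype) (toSub W') ⊥ bot_le hA
      (fun γ v hv => by rw [Submodule.mem_bot] at hv; rw [hv, map_zero]; exact Submodule.zero_mem ⊥)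
      hnebot
    have hvfix' : ∀ x : G, x ∈ N → rho k G H x v = v := by
      intro x hx
      have := hvfix ⟨x, hx⟩
      rw [Submodule.mem_bot, sub_eq_zero] at this
      exact this
    apply hv0
    rw [Submodule.mem_bot]
    apply Finsupp.ext
    intro lam
    obtain ⟨g, rfl⟩ := QuotientGroup.mk_surjective lam
    set u : (G ⧸ H) →₀ k := rho k G H g⁻¹ v with hu
    have huW' : u ∈ toSub W' := toSub_stable W' g⁻¹ hvW'
    have huF : u ∈ FixS k H R := by
      intro r hr
      have hconj : g * r * g⁻¹ ∈ N := hNnorm.conj_mem r hr.1 g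
      rw [hu]
      rw [← Module.End.mul_apply, ← map_mul]
      have hgr : r * g⁻¹ = g⁻¹ * (g * r * g⁻¹) := by group
      rw [hgr, map_mul, Module.End.mul_apply, hvfix' _ hconj]
    have huZ : u ∈ ZerS k H R := hW' ⟨huW', huF⟩
    have h1 : u x₀ = 0 := huZ x₀ (fun r hr => base_fixed hr)
    rw [hu, rho_apply, inv_inv] at h1
    have h2 : g • x₀ = QuotientGroup.mk g := by
      rw [hx₀, MulAction.Quotient.smul_mk, smul_eq_mul, mul_one]
    rw [h2] at h1
    rw [h1]
    rfl
  -- the projection onto (toSub U) along (toSub W)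
  have hcompl : IsCompl (toSub U) (toSub W) := toSub_isCompl hUW
  set π : ((G ⧸ H) →₀ k) →ₗ[k] ((G ⧸ H) →₀ k) :=
    (toSub U).subtype.comp (Submodule.linearProjOfIsCompl _ _ hcompl) with hπdef
  have hπleft : ∀ a ∈ toSub U, π a = a := by
    intro a ha
    rw [hπdef]
    simp only [LinearMap.coe_comp, Function.comp_apply, Submodule.coe_subtype]
    exact congrArg Subtype.val (Submodule.projectionOnto_apply_of_mem_left hcompl ha)
  have hπright : ∀ b ∈ toSub W, π b = 0 := by
    intro b hb
    rw [hπdef]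
    simp only [LinearMap.coe_comp, Function.comp_apply, Submodule.coe_subtype]
    rw [show ((toSub U).linearProjOfIsCompl (toSub W) hcompl) b = 0 from
      Submodule.projectionOnto_apply_of_mem_right hcompl hb]
    rfl
  have hπcomm : ∀ (g : G) (m : (G ⧸ H) →₀ k), π (rho k G H g m) = rho k G H g (π m) := by
    intro g m
    have hmtop : m ∈ toSub U ⊔ toSub W := by rw [hcompl.sup_eq_top]; trivial
    obtain ⟨a, ha, b, hb, hab⟩ := Submodule.mem_sup.mp hmtop
    have h1 : π (a + b) = a := by rw [map_add, hπleft a ha, hπright b hb, add_zero]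
    have h2 : rho k G H g (a + b) = rho k G H g a + rho k G H g b := map_add _ _ _
    rw [← hab, h1, h2, map_add, hπleft _ (toSub_stable U g ha),
      hπright _ (toSub_stable W g hb), add_zero]
  -- dichotomy via the Brauer quotient at R
  have hdich : (toSub U ⊓ FixS k H R ≤ ZerS k H R) ∨ (toSub W ⊓ FixS k H R ≤ ZerS k H R) := by
    by_contra hcon
    push_neg at hcon
    obtain ⟨hU', hW'⟩ := hcon
    -- stability facts for the centralizer action
    have hstabF : ∀ (c : G), c ∈ C → ∀ v ∈ FixS k H R, rho k G H c v ∈ FixS k H R := by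
      intro c hc v hv r hr
      have hcr : r * c = c * r := Subgroup.mem_centralizer_iff.mp hc r hr
      rw [← Module.End.mul_apply, ← map_mul, hcr, map_mul, Module.End.mul_apply, hv r hr]
    have hstabZ : ∀ (c : G), c ∈ C → ∀ v ∈ ZerS k H R, rho k G H c v ∈ ZerS k H R := by
      intro c hc v hv ω hω
      rw [rho_apply]
      apply hv
      intro r hr
      have hcr : r * c = c * r := Subgroup.mem_centralizer_iff.mp hc r hr
      have hrc : r * c⁻¹ = c⁻¹ * r := by
        have h2 : c⁻¹ * r * c = r := by
          rw [mul_assoc, hcr, ← mul_assoc, inv_mul_cancel, one_mul]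
        calc r * c⁻¹ = c⁻¹ * r * c * c⁻¹ := by rw [h2]
        _ = c⁻¹ * r := by rw [mul_assoc, mul_inv_cancel, mul_one]
      rw [← mul_smul, hrc, mul_smul, hω r hr]
    -- apply the relative fixed point lemma on both sides
    have hget : ∀ (X : Submodule (MonoidAlgebra k G) (PermutationModule k G (G ⧸ H))),
        ¬ (toSub X ⊓ FixS k H R ≤ ZerS k H R) →
        ∃ v, v ∈ toSub X ⊓ FixS k H R ∧ v ∉ ZerS k H R ∧
          ∀ c : C, rho k G H (c : G) v - v ∈ ZerS k H R := by
      intro X hX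
      have hne : ¬ (toSub X ⊓ FixS k H R ≤ (toSub X ⊓ FixS k H R) ⊓ ZerS k H R) := by
        intro hle
        exact hX (fun v hv => ((hle hv).2 : v ∈ ZerS k H R))
      obtain ⟨v, hv1, hv2, hv3⟩ := pgroup_exists_relative_fixed p k C hCp
        ((G ⧸ H) →₀ k) ((rho k G H).comp C.subtype)
        (toSub X ⊓ FixS k H R) ((toSub X ⊓ FixS k H R) ⊓ ZerS k H R) inf_le_left
        (by
          rintro ⟨c, hc⟩ v ⟨hvX, hvF⟩
          exact ⟨toSub_stable X c hvX, hstabF c hc v hvF⟩)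
        (by
          rintro ⟨c, hc⟩ v ⟨⟨hvX, hvF⟩, hvZ⟩
          exact ⟨⟨toSub_stable X c hvX, hstabF c hc v hvF⟩, hstabZ c hc v hvZ⟩)
        hne
      refine ⟨v, hv1, fun hz => hv2 ⟨hv1, hz⟩, fun c => ?_⟩
      exact ((hv3 c).2 : _ ∈ ZerS k H R)
    obtain ⟨v, ⟨hvU, hvF⟩, hvZ, hvC⟩ := hget U hU'
    obtain ⟨w, ⟨hwW, hwF⟩, hwZ, hwC⟩ := hget W hW'
    -- values at fixed points are constant
    have hconst : ∀ (v' : (G ⧸ H) →₀ k), v' ∈ FixS k H R →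
        (∀ c : C, rho k G H (c : G) v' - v' ∈ ZerS k H R) →
        ∀ ω : G ⧸ H, (∀ r ∈ R, r • ω = ω) → v' ω = v' x₀ := by
      intro v' hv'F hv'C ω hω
      obtain ⟨c, hc, rfl⟩ := fixed_pt_eq_smul_base hfus hRP hNnorm ω hω
      have hx₀fix : ∀ r ∈ R, r • x₀ = x₀ := fun r hr => base_fixed hr
      have ht := hv'C (⟨c, hc⟩ : C)⁻¹
      have htz : (rho k G H c⁻¹ v' - v') x₀ = 0 := by
        apply ht
        exact hx₀fix
      rw [Finsupp.sub_apply, sub_eq_zero] at htz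
      have heval : (rho k G H c⁻¹ v') x₀ = v' (c • x₀) := by
        rw [rho_apply, inv_inv]
      rw [← heval, htz]
    -- both values are nonzero
    have hvα : v x₀ ≠ 0 := by
      intro h0
      apply hvZ
      intro ω hω
      rw [hconst v hvF hvC ω hω, h0]
    have hwβ : w x₀ ≠ 0 := by
      intro h0
      apply hwZ
      intro ω hω
      rw [hconst w hwF hwC ω hω, h0]
    -- the combination t lies in Fix ⊓ Zer
    set t : (G ⧸ H) →₀ k := (w x₀) • v - (v x₀) • w with hT
    have htF : t ∈ FixS k H R :=
      (FixS k H R).sub_mem ((FixS k H R).smul_mem _ hvF) ((FixS k H R).smul_mem _ hwF)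
    have htZ : t ∈ ZerS k H R := by
      intro ω hω
      rw [hT, Finsupp.sub_apply, Finsupp.smul_apply, Finsupp.smul_apply,
        hconst v hvF hvC ω hω, hconst w hwF hwC ω hω, smul_eq_mul, smul_eq_mul]
      ring
    -- project and conclude
    have hπt : π t = (w x₀) • v := by
      rw [hT, map_sub, map_smul, map_smul, hπleft v hvU, hπright w hwW, smul_zero, sub_zero]
    have hπtZ : π t ∈ ZerS k H R := by
      haveI : Fintype (G ⧸ H) := Fintype.ofFinite _
      exact proj_zer R (hNp.to_le inf_le_left) π hπcomm t.support.card t le_rfl htF htZ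
    rw [hπt] at hπtZ
    apply hvZ
    have : v = (w x₀)⁻¹ • ((w x₀) • v) := by
      rw [smul_smul, inv_mul_cancel₀ hwβ, one_smul]
    rw [this]
    exact (ZerS k H R).smul_mem _ hπtZ
  rcases hdich with h | h
  · left; exact hfinal U h
  · right; exact hfinal W h

end S7


/-- if `F_P(H) = F_P(G)` for a Sylow `p`-subgroup `P` of `H ≤ G` and there
is a normal `p`-subgroup `N ⊴ G` with `C_G(N ∩ H)` a `p`-group, then `k[G/H]` is an
indecomposable `kG`-module. -/
theorem statement7 (p : ℕ) [Fact p.Prime] (k : Type*) [Field k] [IsAlgClosed k] [CharP k p]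
    (G : Type*) [Group G] [Finite G] (H P : Subgroup G)
    (hsyl : IsSylowIn p H P) (hfus : FusionSystemsEq H P)
    (hN : ∃ N : Subgroup G, N.Normal ∧ IsPGroup p N ∧
      IsPGroup p (Subgroup.centralizer ((N ⊓ H : Subgroup G) : Set G))) :
    IsIndecomposableModule (MonoidAlgebra k G) (PermutationModule k G (G ⧸ H)) := by
  classical
  obtain ⟨N, hNnorm, hNp, hCp⟩ := hN
  constructor
  · have h1 : (Finsupp.single (QuotientGroup.mk (1 : G) : G ⧸ H) (1 : k)) ≠ 0 :=
      fun h => one_ne_zero ((Finsupp.single_eq_zero).mp h)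
    refine ⟨⟨(S7.eqv k G H).symm 0,
      (S7.eqv k G H).symm (Finsupp.single (QuotientGroup.mk (1 : G)) (1 : k)), ?_⟩⟩
    intro h
    exact h1 ((S7.eqv k G H).symm.injective h).symm
  · intro U W hUW
    exact S7.main hsyl hfus hNnorm hNp hCp U W hUW
end

section
/- Let p be a prime and M = Qd(p), with V, α and P = V⟨α⟩ as below. Then the normalizer N_M(P) of P in M equals the set of elements (v, A) of M with v ∈ ℤ/p × ℤ/p and A ∈ SL(2,p) upper triangular, i.e. N_M(P) = V ⋊ { [[r,l],[0,r⁻¹]] : r ∈ (ℤ/p)ˣ, l ∈ ℤ/p }. -/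
/-- `SL(2, p)`. -/
abbrev SL2 (p : ℕ) := Matrix.SpecialLinearGroup (Fin 2) (ZMod p)

/-- The additive automorphism of `ℤ/p × ℤ/p` (as `Fin 2 → ZMod p`) given by a
matrix in `SL(2, p)` acting by matrix–vector multiplication. -/
def sl2AddAut (p : ℕ) (A : SL2 p) : AddAut (Fin 2 → ZMod p) where
  toFun v := (A : Matrix (Fin 2) (Fin 2) (ZMod p)).mulVec v
  invFun v := ((A⁻¹ : SL2 p) : Matrix (Fin 2) (Fin 2) (ZMod p)).mulVec v
  left_inv v := by
    show (_ : Matrix (Fin 2) (Fin 2) (ZMod p)).mulVec (Matrix.mulVec _ v) = v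
    rw [Matrix.mulVec_mulVec, ← Matrix.SpecialLinearGroup.coe_mul, inv_mul_cancel,
      Matrix.SpecialLinearGroup.coe_one, Matrix.one_mulVec]
  right_inv v := by
    show (_ : Matrix (Fin 2) (Fin 2) (ZMod p)).mulVec (Matrix.mulVec _ v) = v
    rw [Matrix.mulVec_mulVec, ← Matrix.SpecialLinearGroup.coe_mul, mul_inv_cancel,
      Matrix.SpecialLinearGroup.coe_one, Matrix.one_mulVec]
  map_add' v w := Matrix.mulVec_add _ v w

/-- The action of `SL(2, p)` on `ℤ/p × ℤ/p` as a homomorphism into the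
(multiplicatively written) automorphism group. -/
def sl2Phi (p : ℕ) : SL2 p →* MulAut (Multiplicative (Fin 2 → ZMod p)) where
  toFun A := AddEquiv.toMultiplicative (sl2AddAut p A)
  map_one' := by
    ext v
    simp [sl2AddAut]
  map_mul' A B := by
    ext v
    simp [sl2AddAut, Matrix.mulVec_mulVec, -Matrix.mulVec_fin_two]

/-- The quadratic group `Qd(p) = (ℤ/p × ℤ/p) ⋊ SL(2, p)`. -/
abbrev Qd (p : ℕ) := SemidirectProduct (Multiplicative (Fin 2 → ZMod p)) (SL2 p) (sl2Phi p)

/-- The normal subgroup `V = ℤ/p × ℤ/p` of `Qd(p)`. -/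
def QdV (p : ℕ) : Subgroup (Qd p) :=
  (SemidirectProduct.inl : Multiplicative (Fin 2 → ZMod p) →* Qd p).range

/-- The unipotent matrix `α = [[1,1],[0,1]] ∈ SL(2,p)`. -/
def alphaSL (p : ℕ) : SL2 p :=
  ⟨!![1, 1; 0, 1], by simp [Matrix.det_fin_two_of]⟩

/-- The element `α` of `Qd(p)`. -/
def Qdalpha (p : ℕ) : Qd p := SemidirectProduct.inr (alphaSL p)

/-- The Sylow `p`-subgroup `P = V⟨α⟩` of `Qd(p)`. -/
def QdP (p : ℕ) : Subgroup (Qd p) := QdV p ⊔ Subgroup.zpowers (Qdalpha p)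

/-- The central element `t = ((1,0), I)` of `P`. -/
def Qdt (p : ℕ) : Qd p := SemidirectProduct.inl (Multiplicative.ofAdd ![1, 0])


variable (p : ℕ) [Fact p.Prime]

/-- The subgroup of upper-unitriangular matrices in SL2. -/
def uniSubgroup : Subgroup (SL2 p) where
  carrier := {B | (B : Matrix (Fin 2) (Fin 2) (ZMod p)) 1 0 = 0 ∧
      (B : Matrix (Fin 2) (Fin 2) (ZMod p)) 0 0 = 1}
  one_mem' := by simp
  mul_mem' := by
    rintro B C ⟨hB1, hB2⟩ ⟨hC1, hC2⟩
    have hB : (B : Matrix (Fin 2) (Fin 2) (ZMod p)) 1 1 = 1 := by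
      have := B.2
      rw [Matrix.det_fin_two, hB1, hB2] at this
      simpa using this
    constructor <;>
      simp [Matrix.mul_apply, Fin.sum_univ_two, hB1, hB2, hC1, hC2, hB]
  inv_mem' := by
    rintro B ⟨hB1, hB2⟩
    have hB : (B : Matrix (Fin 2) (Fin 2) (ZMod p)) 1 1 = 1 := by
      have := B.2
      rw [Matrix.det_fin_two, hB1, hB2] at this
      simpa using this
    rw [Matrix.SpecialLinearGroup.SL2_inv_expl]
    constructor <;> simp [hB1, hB]

lemma alpha_pow (n : ℕ) :
    ((alphaSL p ^ n : SL2 p) : Matrix (Fin 2) (Fin 2) (ZMod p)) = !![1, (n : ZMod p); 0, 1] := by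
  induction n with
  | zero => simp [Matrix.one_fin_two]
  | succ n ih =>
      rw [pow_succ, Matrix.SpecialLinearGroup.coe_mul, ih]
      show _ * ((alphaSL p : Matrix (Fin 2) (Fin 2) (ZMod p))) = _
      rw [show (alphaSL p : Matrix (Fin 2) (Fin 2) (ZMod p)) = !![1,1;0,1] from rfl]
      ext i j
      fin_cases i <;> fin_cases j <;>
        simp [Matrix.mul_apply, Fin.sum_univ_two] <;> ring

lemma mem_zpowers_alpha_iff (B : SL2 p) :
    B ∈ Subgroup.zpowers (alphaSL p) ↔
      (B : Matrix (Fin 2) (Fin 2) (ZMod p)) 1 0 = 0 ∧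
      (B : Matrix (Fin 2) (Fin 2) (ZMod p)) 0 0 = 1 := by
  constructor
  · intro h
    have : Subgroup.zpowers (alphaSL p) ≤ uniSubgroup p := by
      rw [Subgroup.zpowers_le]
      constructor <;> simp [alphaSL]
    exact this h
  · rintro ⟨h1, h2⟩
    refine ⟨(((B : Matrix (Fin 2) (Fin 2) (ZMod p)) 0 1).val : ℤ), ?_⟩
    have hB : (B : Matrix (Fin 2) (Fin 2) (ZMod p)) 1 1 = 1 := by
      have := B.2
      rw [Matrix.det_fin_two, h1, h2] at this
      simpa using this
    apply Subtype.ext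
    show ((alphaSL p ^ ((((B : Matrix (Fin 2) (Fin 2) (ZMod p)) 0 1).val : ℕ) : ℤ) : SL2 p) : Matrix (Fin 2) (Fin 2) (ZMod p)) = _
    rw [zpow_natCast, alpha_pow]
    ext i j
    fin_cases i <;> fin_cases j <;> simp [h1, h2, hB, ZMod.natCast_val, ZMod.cast_id]

lemma mem_QdP_iff (g : Qd p) :
    g ∈ QdP p ↔ g.right ∈ Subgroup.zpowers (alphaSL p) := by
  constructor
  · intro h
    have hle : QdP p ≤ (Subgroup.zpowers (alphaSL p)).comap
        (SemidirectProduct.rightHom : Qd p →* SL2 p) := by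
      apply sup_le
      · rintro x ⟨n, rfl⟩
        simp only [Subgroup.mem_comap, SemidirectProduct.rightHom_inl]
        exact Subgroup.one_mem _
      · rintro x ⟨k, rfl⟩
        simp only [Subgroup.mem_comap, map_zpow]
        exact Subgroup.zpow_mem _ (Subgroup.mem_zpowers _) k
    exact hle h
  · rintro ⟨k, hk⟩
    rw [← SemidirectProduct.inl_left_mul_inr_right g]
    apply Subgroup.mul_mem
    · exact Subgroup.mem_sup_left ⟨g.left, rfl⟩
    · apply Subgroup.mem_sup_right
      refine ⟨k, ?_⟩
      show Qdalpha p ^ k = _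
      rw [show (Qdalpha p) ^ k = SemidirectProduct.inr (alphaSL p ^ k) from (map_zpow _ _ _).symm]
      exact congrArg _ hk

set_option maxRecDepth 8000 in
/-- the normalizer of `P` in `Qd(p)` consists exactly of the elements
`(v, A)` whose matrix part has the form `[[r, l], [0, r⁻¹]]` with `r` a unit. -/
theorem statement10 (p : ℕ) [Fact p.Prime] :
    (Subgroup.normalizer (QdP p : Set (Qd p)) : Set (Qd p)) =
      {x : Qd p | ∃ (r : (ZMod p)ˣ) (l : ZMod p),
        (x.right : Matrix (Fin 2) (Fin 2) (ZMod p)) =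
          !![(r : ZMod p), l; 0, ((r⁻¹ : (ZMod p)ˣ) : ZMod p)]} := by
  ext x
  simp only [SetLike.mem_coe, Set.mem_setOf_eq, Subgroup.mem_normalizer_iff]
  have hright : ∀ g : Qd p, (x * g * x⁻¹).right = x.right * g.right * x.right⁻¹ := by
    intro g; simp
  have hAinv : ∀ A : SL2 p, ((A⁻¹ : SL2 p) : Matrix (Fin 2) (Fin 2) (ZMod p)) =
      !![(A : Matrix (Fin 2) (Fin 2) (ZMod p)) 1 1, -(A : Matrix (Fin 2) (Fin 2) (ZMod p)) 0 1;
         -(A : Matrix (Fin 2) (Fin 2) (ZMod p)) 1 0, (A : Matrix (Fin 2) (Fin 2) (ZMod p)) 0 0] := by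
    intro A
    rw [Matrix.SpecialLinearGroup.SL2_inv_expl]
    rfl
  constructor
  · intro h
    have hmem : x * SemidirectProduct.inr (alphaSL p) * x⁻¹ ∈ QdP p := by
      rw [← h, mem_QdP_iff]
      simp only [SemidirectProduct.right_inr]
      exact Subgroup.mem_zpowers _
    rw [mem_QdP_iff, hright, mem_zpowers_alpha_iff] at hmem
    simp only [SemidirectProduct.right_inr] at hmem
    have key : ((x.right * alphaSL p * x.right⁻¹ : SL2 p) : Matrix (Fin 2) (Fin 2) (ZMod p)) 1 0 =
        -((x.right : Matrix (Fin 2) (Fin 2) (ZMod p)) 1 0)^2 := by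
      rw [Matrix.SpecialLinearGroup.coe_mul, Matrix.SpecialLinearGroup.coe_mul, hAinv,
        show ((alphaSL p : SL2 p) : Matrix (Fin 2) (Fin 2) (ZMod p)) = !![1,1;0,1] from rfl]
      simp only [Matrix.mul_apply, Fin.sum_univ_two, Matrix.cons_val', Matrix.cons_val_zero, Matrix.cons_val_one, Matrix.head_cons, Matrix.head_fin_const, Matrix.empty_val', Matrix.cons_val_fin_one, Matrix.of_apply]
      ring
    have hc : (x.right : Matrix (Fin 2) (Fin 2) (ZMod p)) 1 0 = 0 := by
      have := hmem.1
      rw [key, neg_eq_zero] at this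
      exact pow_eq_zero_iff (by norm_num) |>.mp this
    have hdet := x.right.2
    rw [Matrix.det_fin_two, hc] at hdet
    simp only [mul_zero, sub_zero] at hdet
    refine ⟨⟨(x.right : Matrix (Fin 2) (Fin 2) (ZMod p)) 0 0,
      (x.right : Matrix (Fin 2) (Fin 2) (ZMod p)) 1 1, hdet, by rw [mul_comm]; exact hdet⟩,
      (x.right : Matrix (Fin 2) (Fin 2) (ZMod p)) 0 1, ?_⟩
    conv_lhs => rw [Matrix.eta_fin_two (x.right : Matrix (Fin 2) (Fin 2) (ZMod p)), hc]
    rfl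
  · rintro ⟨r, l, hAr⟩ g
    rw [mem_QdP_iff, mem_QdP_iff, hright, mem_zpowers_alpha_iff, mem_zpowers_alpha_iff]
    have had : (r : ZMod p) * ((r⁻¹ : (ZMod p)ˣ) : ZMod p) = 1 := by
      rw [← Units.val_mul, mul_inv_cancel, Units.val_one]
    have hAinv' : ((x.right⁻¹ : SL2 p) : Matrix (Fin 2) (Fin 2) (ZMod p)) =
        !![((r⁻¹ : (ZMod p)ˣ) : ZMod p), -l; 0, (r : ZMod p)] := by
      rw [hAinv, hAr]
      ext i j
      fin_cases i <;> fin_cases j <;>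
        simp only [Matrix.cons_val', Matrix.cons_val_zero, Matrix.cons_val_one, Matrix.head_cons,
          Matrix.head_fin_const, Matrix.empty_val', Matrix.cons_val_fin_one, Matrix.of_apply,
          neg_zero]
    have hCmul : ((x.right * g.right * x.right⁻¹ : SL2 p) : Matrix (Fin 2) (Fin 2) (ZMod p)) =
        !![(r : ZMod p), l; 0, ((r⁻¹ : (ZMod p)ˣ) : ZMod p)] *
          (g.right : Matrix (Fin 2) (Fin 2) (ZMod p)) *
          !![((r⁻¹ : (ZMod p)ˣ) : ZMod p), -l; 0, (r : ZMod p)] := by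
      rw [Matrix.SpecialLinearGroup.coe_mul, Matrix.SpecialLinearGroup.coe_mul, hAr, hAinv']
    have hC10 : ((x.right * g.right * x.right⁻¹ : SL2 p) : Matrix (Fin 2) (Fin 2) (ZMod p)) 1 0 =
        ((r⁻¹ : (ZMod p)ˣ) : ZMod p)^2 * (g.right : Matrix (Fin 2) (Fin 2) (ZMod p)) 1 0 := by
      rw [hCmul]
      simp only [Matrix.mul_apply, Fin.sum_univ_two, Matrix.cons_val', Matrix.cons_val_zero, Matrix.cons_val_one, Matrix.head_cons, Matrix.head_fin_const, Matrix.empty_val', Matrix.cons_val_fin_one, Matrix.of_apply]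
      ring
    have hC00 : ((x.right * g.right * x.right⁻¹ : SL2 p) : Matrix (Fin 2) (Fin 2) (ZMod p)) 0 0 =
        (g.right : Matrix (Fin 2) (Fin 2) (ZMod p)) 0 0 +
        l * ((r⁻¹ : (ZMod p)ˣ) : ZMod p) * (g.right : Matrix (Fin 2) (Fin 2) (ZMod p)) 1 0 := by
      rw [hCmul]
      simp only [Matrix.mul_apply, Fin.sum_univ_two, Matrix.cons_val', Matrix.cons_val_zero, Matrix.cons_val_one, Matrix.head_cons, Matrix.head_fin_const, Matrix.empty_val', Matrix.cons_val_fin_one, Matrix.of_apply]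
      linear_combination (g.right : Matrix (Fin 2) (Fin 2) (ZMod p)) 0 0 * had
    constructor
    · rintro ⟨h1, h2⟩
      refine ⟨by rw [hC10, h1, mul_zero], by rw [hC00, h1, h2, mul_zero, add_zero]⟩
    · rintro ⟨h1, h2⟩
      rw [hC10] at h1
      have hB10 : (g.right : Matrix (Fin 2) (Fin 2) (ZMod p)) 1 0 = 0 := by
        rcases mul_eq_zero.mp h1 with hz | hz
        · exact absurd (pow_eq_zero_iff (by norm_num) |>.mp hz) (Units.ne_zero r⁻¹)
        · exact hz
      refine ⟨hB10, ?_⟩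
      rw [hC00, hB10, mul_zero, add_zero] at h2
      exact h2
end

section
/- Let p be an odd prime, M = Qd(p), P = V⟨α⟩ its Sylow p-subgroup as below, G = Park(M,P) Park's group and ι : M → G Park's embedding. Then for every subgroup Q of P of order p², the centralizer C_G(ι(Q)) of ι(Q) in G is a p-group. -/
section Aux
set_option linter.unusedSectionVars false
variable {p : ℕ} [Fact p.Prime]

/-- unipotent matrix in SL2 -/
def unip (p : ℕ) (c : ZMod p) : SL2 p :=
  ⟨!![1, c; 0, 1], by simp [Matrix.det_fin_two_of]⟩

@[simp] lemma unip_coe (c : ZMod p) :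
    ((unip p c : SL2 p) : Matrix (Fin 2) (Fin 2) (ZMod p)) = !![1, c; 0, 1] := rfl

lemma unip_mul (a b : ZMod p) : unip p a * unip p b = unip p (a + b) := by
  apply Subtype.ext
  show (!![1, a; 0, 1] : Matrix (Fin 2) (Fin 2) (ZMod p)) * !![1, b; 0, 1] = _
  rw [Matrix.mul_fin_two]
  norm_num [add_comm]

@[simp] lemma unip_zero : unip p 0 = 1 := by
  apply Subtype.ext
  show (!![1, (0:ZMod p); 0, 1]) = (1 : Matrix (Fin 2) (Fin 2) (ZMod p))
  rw [Matrix.one_fin_two]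

lemma unip_inj {a b : ZMod p} (h : unip p a = unip p b) : a = b := by
  have := congrArg (fun M : SL2 p => (M : Matrix (Fin 2) (Fin 2) (ZMod p)) 0 1) h
  simpa using this

lemma unip_pow (a : ZMod p) (n : ℕ) : (unip p a) ^ n = unip p (n * a) := by
  induction n with
  | zero => simp
  | succ n ih => rw [pow_succ, ih, unip_mul]; push_cast; ring_nf

lemma unip_inv (a : ZMod p) : (unip p a)⁻¹ = unip p (-a) := by
  refine inv_eq_of_mul_eq_one_right ?_
  rw [unip_mul]; simp

lemma alphaSL_eq : alphaSL p = unip p 1 := rfl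

lemma mulVec_unip (c : ZMod p) (v : Fin 2 → ZMod p) :
    Matrix.mulVec !![1, c; 0, 1] v = ![v 0 + c * v 1, v 1] := by
  funext i
  fin_cases i <;> simp [Matrix.mulVec, dotProduct, Fin.sum_univ_succ]

/-- convenient constructor for elements of `Qd p` -/
def qd (v : Fin 2 → ZMod p) (A : SL2 p) : Qd p := ⟨Multiplicative.ofAdd v, A⟩

@[simp] lemma qd_left (v : Fin 2 → ZMod p) (A : SL2 p) :
    (qd v A).left = Multiplicative.ofAdd v := rfl
@[simp] lemma qd_right (v : Fin 2 → ZMod p) (A : SL2 p) : (qd v A).right = A := rfl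

lemma qd_eta (m : Qd p) : m = qd (Multiplicative.toAdd m.left) m.right := rfl

lemma qd_mul (v w : Fin 2 → ZMod p) (A B : SL2 p) :
    qd v A * qd w B = qd (v + (A : Matrix (Fin 2) (Fin 2) (ZMod p)).mulVec w) (A * B) := rfl

lemma qd_eq_iff (v w : Fin 2 → ZMod p) (A B : SL2 p) :
    qd v A = qd w B ↔ v = w ∧ A = B := by
  constructor
  · intro h
    exact ⟨congrArg (fun m : Qd p => Multiplicative.toAdd m.left) h,
      congrArg (fun m : Qd p => m.right) h⟩
  · rintro ⟨rfl, rfl⟩; rfl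

lemma inl_eq_qd (v : Fin 2 → ZMod p) :
    (SemidirectProduct.inl (Multiplicative.ofAdd v) : Qd p) = qd v 1 := by
  rw [qd_eta (SemidirectProduct.inl (Multiplicative.ofAdd v))]; rfl

end Aux
section Aux2
set_option linter.unusedSectionVars false
variable {p : ℕ} [Fact p.Prime]

lemma unip_zpow (a : ZMod p) (n : ℤ) : (unip p a) ^ n = unip p (n * a) := by
  cases n with
  | ofNat k => rw [Int.ofNat_eq_coe, zpow_natCast, unip_pow]; push_cast; ring_nf
  | negSucc k =>
      rw [zpow_negSucc, unip_pow, unip_inv]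
      congr 1
      push_cast
      ring

lemma alphaSL_pow (n : ℕ) : (alphaSL p) ^ n = unip p n := by
  rw [alphaSL_eq, unip_pow, mul_one]

lemma alphaSL_zpow (n : ℤ) : (alphaSL p) ^ n = unip p n := by
  rw [alphaSL_eq, unip_zpow, mul_one]

def unipSub (p : ℕ) [Fact p.Prime] : Subgroup (SL2 p) where
  carrier := Set.range (unip p)
  mul_mem' := by rintro A B ⟨a, rfl⟩ ⟨b, rfl⟩; exact ⟨a + b, (unip_mul a b).symm⟩
  one_mem' := ⟨0, unip_zero⟩
  inv_mem' := by rintro A ⟨a, rfl⟩; exact ⟨-a, (unip_inv a).symm⟩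

lemma memP_iff (g : Qd p) : g ∈ QdP p ↔ ∃ c : ZMod p, g.right = unip p c := by
  constructor
  · intro h
    have hle : QdP p ≤ Subgroup.comap (SemidirectProduct.rightHom) (Subgroup.closure
        (Set.range (unip p))) := by
      rw [QdP]
      apply sup_le
      · rintro g ⟨n, rfl⟩
        simp only [Subgroup.mem_comap, SemidirectProduct.rightHom_inl]
        exact one_mem _
      · rintro g ⟨z, rfl⟩
        simp only [Subgroup.mem_comap, map_zpow]
        have : SemidirectProduct.rightHom (Qdalpha p) = alphaSL p := by
          simp [Qdalpha]
        rw [this, alphaSL_zpow]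
        exact Subgroup.subset_closure ⟨(z : ZMod p), rfl⟩
    have := hle h
    simp only [Subgroup.mem_comap] at this
    have hset : (Subgroup.closure (Set.range (unip p)) : Subgroup (SL2 p)) ≤ unipSub p :=
      (Subgroup.closure_le _).2 (le_refl _)
    obtain ⟨c, hc⟩ := hset this
    exact ⟨c, hc.symm⟩
  · rintro ⟨c, hc⟩
    have hg : g = SemidirectProduct.inl g.left * SemidirectProduct.inr g.right :=
      (SemidirectProduct.inl_left_mul_inr_right g).symm
    rw [hg]
    apply Subgroup.mul_mem
    · exact Subgroup.mem_sup_left ⟨g.left, rfl⟩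
    · apply Subgroup.mem_sup_right
      refine ⟨(c.val : ℤ), ?_⟩
      show (SemidirectProduct.inr (alphaSL p) : Qd p) ^ (c.val : ℤ) = _
      rw [← map_zpow, alphaSL_zpow, hc]
      norm_cast
      rw [ZMod.natCast_val, ZMod.cast_id]

lemma V_mem_P (w : Fin 2 → ZMod p) : qd w 1 ∈ QdP p :=
  (memP_iff _).2 ⟨0, by simp⟩

lemma qd_mem_P (w : Fin 2 → ZMod p) (c : ZMod p) : qd w (unip p c) ∈ QdP p :=
  (memP_iff _).2 ⟨c, rfl⟩

lemma expP (g : Qd p) (hg : g ∈ QdP p) : g ^ (p * p) = 1 := by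
  obtain ⟨c, hc⟩ := (memP_iff g).1 hg
  have h1 : (g ^ p).right = 1 := by
    have : (g ^ p).right = (SemidirectProduct.rightHom g) ^ p := by
      rw [← map_pow]; rfl
    rw [this, SemidirectProduct.rightHom_eq_right, hc, unip_pow]
    simp [ZMod.natCast_self]
  have h2 : g ^ p = SemidirectProduct.inl ((g ^ p).left) := by
    conv_lhs => rw [← SemidirectProduct.inl_left_mul_inr_right (g ^ p)]
    rw [h1]
    simp
  have h3 : ((g ^ p).left) ^ p = 1 := by
    apply Multiplicative.toAdd.injective
    simp only [toAdd_pow, toAdd_one]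
    funext i
    show p • (Multiplicative.toAdd (g ^ p).left i) = 0
    rw [nsmul_eq_mul, ZMod.natCast_self, zero_mul]
  have : g ^ (p * p) = (g ^ p) ^ p := by rw [pow_mul]
  rw [this, h2, ← map_pow, h3, map_one]

end Aux2
section Aux3
set_option linter.unusedSectionVars false
variable {p : ℕ} [Fact p.Prime]

lemma finiteQd : Finite (Qd p) := by
  haveI : NeZero p := ⟨(Fact.out : p.Prime).ne_zero⟩
  exact Finite.of_equiv (Multiplicative (Fin 2 → ZMod p) × SL2 p)
    ⟨fun x => ⟨x.1, x.2⟩, fun g => (g.left, g.right), fun x => rfl, fun g => rfl⟩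

lemma memV_iff (g : Qd p) : g ∈ QdV p ↔ ∃ w : Fin 2 → ZMod p, g = qd w 1 := by
  constructor
  · rintro ⟨n, rfl⟩
    exact ⟨Multiplicative.toAdd n, by rw [← inl_eq_qd]; simp⟩
  · rintro ⟨w, rfl⟩
    exact ⟨Multiplicative.ofAdd w, (inl_eq_qd w).symm⟩

lemma right_mul (g h : Qd p) : (g * h).right = g.right * h.right := rfl

lemma right_pow (g : Qd p) (n : ℕ) : (g ^ n).right = g.right ^ n := by
  induction n with
  | zero => rfl
  | succ n ih => rw [pow_succ, right_mul, ih, pow_succ]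

lemma left1_mul (g h : Qd p) (c : ZMod p) (hg : g.right = unip p c) :
    Multiplicative.toAdd (g * h).left 1
      = Multiplicative.toAdd g.left 1 + Multiplicative.toAdd h.left 1 := by
  have h1 : Multiplicative.toAdd (g * h).left
      = Multiplicative.toAdd g.left
        + (unip p c : Matrix (Fin 2) (Fin 2) (ZMod p)).mulVec (Multiplicative.toAdd h.left) := by
    rw [SemidirectProduct.mul_left, ← hg]
    rfl
  rw [h1, unip_coe, mulVec_unip]
  simp

lemma left1_pow (g : Qd p) (c : ZMod p) (hg : g.right = unip p c) (n : ℕ) :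
    Multiplicative.toAdd (g ^ n).left 1 = n * Multiplicative.toAdd g.left 1 := by
  induction n with
  | zero => simp
  | succ n ih =>
      rw [pow_succ, left1_mul (g ^ n) g (n * c) (by rw [right_pow, hg, unip_pow]), ih]
      push_cast
      ring

lemma left1_inv (g : Qd p) (c : ZMod p) (hg : g.right = unip p c) :
    Multiplicative.toAdd g⁻¹.left 1 = - Multiplicative.toAdd g.left 1 := by
  have h0 : Multiplicative.toAdd (g * g⁻¹).left 1 = 0 := by simp
  rw [left1_mul g g⁻¹ c hg] at h0
  linear_combination h0

lemma qd_one_pow (w : Fin 2 → ZMod p) (n : ℕ) : (qd w 1 : Qd p) ^ n = qd (n • w) 1 := by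
  induction n with
  | zero => show _ = qd ((0 : ℕ) • w) 1; rw [zero_smul]; rfl
  | succ n ih =>
      rw [pow_succ, ih, qd_mul, Matrix.SpecialLinearGroup.coe_one, Matrix.one_mulVec, mul_one,
        succ_nsmul]

lemma line_fill (Q : Subgroup (Qd p)) (d : ZMod p) (hd : d ≠ 0)
    (hin : qd ![d, 0] 1 ∈ Q) (s : ZMod p) : qd ![s, 0] 1 ∈ Q := by
  haveI : NeZero p := ⟨(Fact.out : p.Prime).ne_zero⟩
  have h := Subgroup.pow_mem Q hin ((s * d⁻¹).val)
  rw [qd_one_pow] at h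
  convert h using 2
  funext i
  fin_cases i
  · show s = ((s * d⁻¹).val : ℕ) • (![d, 0] 0)
    rw [nsmul_eq_mul, ZMod.natCast_val, ZMod.cast_id]
    simp only [Matrix.cons_val_zero]
    field_simp
  · show (0 : ZMod p) = ((s * d⁻¹).val : ℕ) • (![d, 0] 1)
    simp

lemma one_eq_qd : (1 : Qd p) = qd 0 1 := rfl

lemma classQ (Q : Subgroup (Qd p)) (hQP : Q ≤ QdP p) (hcard : Nat.card Q = p ^ 2) :
    Q = QdV p ∨ ∃ k : ZMod p, ∀ g : Qd p,
      (g ∈ Q ↔ ∃ x i : ZMod p, g = qd ![x, k * i] (unip p i)) := by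
  have hp : p.Prime := Fact.out
  haveI : NeZero p := ⟨hp.ne_zero⟩
  haveI : Finite (Qd p) := finiteQd
  have hcardV : Nat.card (QdV p) = p ^ 2 := by
    rw [QdV, Nat.card_congr (MonoidHom.ofInjective
      (SemidirectProduct.inl_injective (φ := sl2Phi p))).toEquiv.symm]
    simp [Nat.card_eq_fintype_card, ZMod.card]
  by_cases hA : ∀ g ∈ Q, (g : Qd p).right = 1
  · left
    have hle : Q ≤ QdV p := by
      intro g hg
      refine ⟨g.left, ?_⟩
      conv_rhs => rw [← SemidirectProduct.inl_left_mul_inr_right g]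
      rw [hA g hg, map_one, mul_one]
    exact Subgroup.eq_of_le_of_card_ge hle (by rw [hcard, hcardV])
  · right
    push_neg at hA
    obtain ⟨b, hbQ, hb1⟩ := hA
    obtain ⟨c0, hc0⟩ := (memP_iff b).1 (hQP hbQ)
    have hc0ne : c0 ≠ 0 := fun h => hb1 (by rw [hc0, h, unip_zero])
    have keymul : ∀ g h : Qd p, g ∈ Q → h ∈ Q →
        ((g * h).right : Matrix (Fin 2) (Fin 2) (ZMod p)) 0 1
          = (g.right : Matrix (Fin 2) (Fin 2) (ZMod p)) 0 1
            + (h.right : Matrix (Fin 2) (Fin 2) (ZMod p)) 0 1 := by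
      intro g h hg hh
      obtain ⟨a, ha⟩ := (memP_iff g).1 (hQP hg)
      obtain ⟨b', hb'⟩ := (memP_iff h).1 (hQP hh)
      rw [right_mul, ha, hb', unip_mul, unip_coe, unip_coe, unip_coe]
      simp
    let f : ↥Q →* Multiplicative (ZMod p) := {
      toFun := fun g => Multiplicative.ofAdd (((g : Qd p).right :
        Matrix (Fin 2) (Fin 2) (ZMod p)) 0 1)
      map_one' := by
        show Multiplicative.ofAdd (((1 : Qd p).right :
          Matrix (Fin 2) (Fin 2) (ZMod p)) 0 1) = 1
        rw [SemidirectProduct.one_right, Matrix.SpecialLinearGroup.coe_one]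
        simp [Matrix.one_apply_ne]
      map_mul' := fun g h => by
        show Multiplicative.ofAdd _ = Multiplicative.ofAdd _ * Multiplicative.ofAdd _
        rw [← ofAdd_add, show ((↑(g * h) : Qd p)) = (↑g * ↑h : Qd p) from rfl,
          keymul (↑g) (↑h) g.2 h.2] }
    have hfval : ∀ (g : ↥Q) (a : ZMod p), (g : Qd p).right = unip p a →
        f g = Multiplicative.ofAdd a := by
      intro g a ha
      show Multiplicative.ofAdd _ = _
      rw [ha, unip_coe]
      congr 1
    have hker : ∀ g : ↥Q, f g = 1 ↔ (g : Qd p).right = 1 := by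
      intro g
      obtain ⟨a, ha⟩ := (memP_iff (g : Qd p)).1 (hQP g.2)
      rw [hfval g a ha, ha]
      constructor
      · intro h
        have ha0 : a = 0 := by simpa using h
        rw [ha0, unip_zero]
      · intro h
        have ha0 : a = 0 := unip_inj (h.trans unip_zero.symm)
        rw [ha0]
        rfl
    have hcardM : Nat.card (Multiplicative (ZMod p)) = p := by
      simp [Nat.card_eq_fintype_card, ZMod.card]
    have hrange : Nat.card f.range = p := by
      have hdvd : Nat.card f.range ∣ p := by
        have hd := Subgroup.card_subgroup_dvd_card f.range
        rwa [hcardM] at hd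
      rcases (Nat.Prime.eq_one_or_self_of_dvd hp _ hdvd) with h1 | h1
      · exfalso
        have hb' : f ⟨b, hbQ⟩ ∈ f.range := ⟨⟨b, hbQ⟩, rfl⟩
        rw [Subgroup.card_eq_one.1 h1, Subgroup.mem_bot, hfval ⟨b, hbQ⟩ c0 hc0] at hb'
        exact hc0ne (by simpa using hb')
      · exact h1
    have hKer : Nat.card f.ker = p := by
      have h1 : Nat.card ↥Q = Nat.card (↥Q ⧸ f.ker) * Nat.card f.ker :=
        Subgroup.card_eq_card_quotient_mul_card_subgroup f.ker
      have h2 : Nat.card (↥Q ⧸ f.ker) = Nat.card f.range :=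
        Nat.card_congr (QuotientGroup.quotientKerEquivRange f).toEquiv
      rw [hcard, h2, hrange, pow_two] at h1
      exact (mul_left_cancel₀ hp.ne_zero h1.symm)
    have S1 : ∀ g : ↥Q, (g : Qd p).right = 1 → Multiplicative.toAdd (g : Qd p).left 1 = 0 := by
      intro h0 hr0
      by_contra hw1
      set w := Multiplicative.toAdd (h0 : Qd p).left with hwdef
      have hh0 : (h0 : Qd p) = qd w 1 := by rw [qd_eta (h0 : Qd p), hr0]
      have hbeta : b = qd (Multiplicative.toAdd b.left) (unip p c0) := by
        rw [← hc0]
        exact qd_eta b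
      have hcomm : qd ![c0 * w 1, 0] 1 * ((h0 : Qd p) * b) = b * (h0 : Qd p) := by
        conv_lhs => rw [hh0, hbeta]
        conv_rhs => rw [hh0, hbeta]
        rw [qd_mul, qd_mul, qd_mul, qd_eq_iff]
        refine ⟨?_, by rw [one_mul, one_mul, mul_one]⟩
        rw [Matrix.SpecialLinearGroup.coe_one, Matrix.one_mulVec, Matrix.one_mulVec,
          unip_coe, mulVec_unip]
        funext i
        fin_cases i <;> (simp; try ring)
      have hzQ : qd ![c0 * w 1, 0] 1 ∈ Q := by
        have heq : qd ![c0 * w 1, 0] 1 = (b * (h0 : Qd p)) * ((h0 : Qd p) * b)⁻¹ := by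
          rw [← hcomm, mul_assoc, mul_inv_cancel, mul_one]
        rw [heq]
        exact mul_mem (mul_mem hbQ h0.2) (inv_mem (mul_mem h0.2 hbQ))
      have hδ : c0 * w 1 ≠ 0 := mul_ne_zero hc0ne hw1
      have hline : ∀ s : ZMod p, qd ![s, 0] 1 ∈ Q := line_fill Q _ hδ hzQ
      have hallv : ∀ v : Fin 2 → ZMod p, qd v 1 ∈ Q := by
        intro v
        have h1 : qd ![v 0 - (v 1 * (w 1)⁻¹) * w 0, 0] 1 ∈ Q := hline _
        have h2 : (h0 : Qd p) ^ ((v 1 * (w 1)⁻¹).val) ∈ Q := pow_mem h0.2 _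
        have h3 := mul_mem h1 h2
        rw [hh0, qd_one_pow] at h3
        have h4 : qd v 1 = qd ![v 0 - (v 1 * (w 1)⁻¹) * w 0, 0] 1
            * qd (((v 1 * (w 1)⁻¹).val : ℕ) • w) 1 := by
          rw [qd_mul, Matrix.SpecialLinearGroup.coe_one, Matrix.one_mulVec, one_mul, qd_eq_iff]
          refine ⟨?_, rfl⟩
          funext i
          have hnval : ((v 1 * (w 1)⁻¹).val : ZMod p) = v 1 * (w 1)⁻¹ := by
            rw [ZMod.natCast_val, ZMod.cast_id]
          fin_cases i
          · show v 0 = (v 0 - (v 1 * (w 1)⁻¹) * w 0) + ((v 1 * (w 1)⁻¹).val : ℕ) • (w 0)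
            rw [nsmul_eq_mul, hnval]
            ring
          · show v 1 = 0 + ((v 1 * (w 1)⁻¹).val : ℕ) • (w 1)
            rw [nsmul_eq_mul, hnval]
            field_simp
            ring
        rw [← h4] at h3
        exact h3
      have hinj : Function.Injective
          (fun v : Fin 2 → ZMod p => (⟨⟨qd v 1, hallv v⟩,
            (hker ⟨qd v 1, hallv v⟩).2 rfl⟩ : f.ker)) := by
        intro v v' hvv'
        have := congrArg (fun x : f.ker => ((x : ↥Q) : Qd p)) hvv'
        simp only at this
        exact ((qd_eq_iff v v' 1 1).1 this).1
      have hle2 := Nat.card_le_card_of_injective _ hinj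
      rw [hKer] at hle2
      have : Nat.card (Fin 2 → ZMod p) = p ^ 2 := by
        simp [Nat.card_eq_fintype_card, ZMod.card]
      rw [this] at hle2
      nlinarith [hp.two_le]
    -- existence of a nontrivial kernel element gives the central line inside Q
    have S2 : ∀ s : ZMod p, qd ![s, 0] 1 ∈ Q := by
      rcases Subgroup.bot_or_exists_ne_one f.ker with hbot | ⟨h0, hh0ker, hne⟩
      · exfalso
        rw [hbot, Subgroup.card_bot] at hKer
        exact hp.one_lt.ne' hKer.symm
      · have hr0 : (h0 : Qd p).right = 1 := (hker h0).1 (MonoidHom.mem_ker.1 hh0ker)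
        have hw1 : Multiplicative.toAdd (h0 : Qd p).left 1 = 0 := S1 h0 hr0
        set w := Multiplicative.toAdd (h0 : Qd p).left with hwdef
        have hwne : w ≠ 0 := by
          intro hw0
          apply hne
          have : (h0 : Qd p) = 1 := by
            rw [qd_eta (h0 : Qd p), hr0, ← hwdef, hw0]
            rfl
          exact Subtype.ext this
        have hw0ne : w 0 ≠ 0 := by
          intro hw0
          apply hwne
          funext i
          fin_cases i
          · exact hw0
          · exact hw1
        have hq0 : qd ![w 0, 0] 1 ∈ Q := by
          have : (h0 : Qd p) = qd ![w 0, 0] 1 := by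
            rw [qd_eta (h0 : Qd p), hr0, qd_eq_iff]
            refine ⟨?_, rfl⟩
            funext i
            fin_cases i
            · rfl
            · exact hw1
          rw [← this]
          exact h0.2
        exact line_fill Q (w 0) hw0ne hq0
    -- the characterization
    refine ⟨Multiplicative.toAdd b.left 1 * c0⁻¹, fun g => ⟨?_, ?_⟩⟩
    · intro hg
      obtain ⟨c, hc⟩ := (memP_iff g).1 (hQP hg)
      set n := (c * c0⁻¹).val with hndef
      have hn : (n : ZMod p) = c * c0⁻¹ := by rw [hndef, ZMod.natCast_val, ZMod.cast_id]
      have hbn_r : (b ^ n).right = unip p c := by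
        rw [right_pow, hc0, unip_pow, hn]
        congr 1
        field_simp
      have hhQ : g * (b ^ n)⁻¹ ∈ Q := mul_mem hg (inv_mem (pow_mem hbQ n))
      have hhr : (g * (b ^ n)⁻¹).right = 1 := by
        rw [right_mul, SemidirectProduct.inv_right, hbn_r, hc, mul_inv_cancel]
      have hS1 := S1 ⟨g * (b ^ n)⁻¹, hhQ⟩ hhr
      simp only at hS1
      rw [left1_mul g (b ^ n)⁻¹ c hc,
        left1_inv (b ^ n) c hbn_r, left1_pow b c0 hc0 n] at hS1
      have hgl1 : Multiplicative.toAdd g.left 1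
          = (Multiplicative.toAdd b.left 1 * c0⁻¹) * c := by
        have : Multiplicative.toAdd g.left 1 = (n : ZMod p) * Multiplicative.toAdd b.left 1 := by
          linear_combination hS1
        rw [this, hn]
        ring
      refine ⟨Multiplicative.toAdd g.left 0, c, ?_⟩
      rw [qd_eta g, hc, qd_eq_iff]
      refine ⟨?_, rfl⟩
      funext i
      fin_cases i
      · rfl
      · exact hgl1
    · rintro ⟨x, i, rfl⟩
      set n := (i * c0⁻¹).val with hndef
      have hn : (n : ZMod p) = i * c0⁻¹ := by rw [hndef, ZMod.natCast_val, ZMod.cast_id]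
      have hbn_r : (b ^ n).right = unip p i := by
        rw [right_pow, hc0, unip_pow, hn]
        congr 1
        field_simp
      have hbn_l1 : Multiplicative.toAdd (b ^ n).left 1
          = (Multiplicative.toAdd b.left 1 * c0⁻¹) * i := by
        rw [left1_pow b c0 hc0 n, hn]
        ring
      have h4 : qd ![x, (Multiplicative.toAdd b.left 1 * c0⁻¹) * i] (unip p i)
          = qd ![x - Multiplicative.toAdd (b ^ n).left 0, 0] 1 * b ^ n := by
        conv_rhs => rw [qd_eta (b ^ n), hbn_r]
        rw [qd_mul, one_mul, Matrix.SpecialLinearGroup.coe_one, Matrix.one_mulVec, qd_eq_iff]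
        refine ⟨?_, rfl⟩
        funext j
        fin_cases j
        · show x = (x - Multiplicative.toAdd (b ^ n).left 0) + Multiplicative.toAdd (b ^ n).left 0
          ring
        · show (Multiplicative.toAdd b.left 1 * c0⁻¹) * i
            = 0 + Multiplicative.toAdd (b ^ n).left 1
          rw [hbn_l1, zero_add]
      rw [h4]
      exact mul_mem (S2 _) (pow_mem hbQ n)

end Aux3
section Aux4
set_option linter.unusedSectionVars false
set_option maxHeartbeats 1000000
variable {p : ℕ} [Fact p.Prime]

lemma mulVec_pair (M : Matrix (Fin 2) (Fin 2) (ZMod p)) (x y : ZMod p) :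
    M.mulVec ![x, y] = ![M 0 0 * x + M 0 1 * y, M 1 0 * x + M 1 1 * y] := by
  funext i
  fin_cases i <;> simp [Matrix.mulVec, dotProduct, Fin.sum_univ_succ]

lemma det_fin_two_SL (A : SL2 p) :
    (A : Matrix (Fin 2) (Fin 2) (ZMod p)) 0 0 * (A : Matrix (Fin 2) (Fin 2) (ZMod p)) 1 1
      - (A : Matrix (Fin 2) (Fin 2) (ZMod p)) 0 1 * (A : Matrix (Fin 2) (Fin 2) (ZMod p)) 1 0
      = 1 := by
  rw [← Matrix.det_fin_two]
  exact A.2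

lemma lemL (Q : Subgroup (Qd p)) (hQP : Q ≤ QdP p) (hQcard : Nat.card Q = p ^ 2)
    (m m' : Qd p)
    (hR : ∀ q ∈ Q, ∀ u ∈ QdP p, (q * m = m * u ↔ q * m' = m' * u)) :
    ∃ q ∈ Q, ∃ u ∈ QdP p, m' = q * m * u := by
  set v := Multiplicative.toAdd m.left with hv
  set A := m.right with hA
  set v' := Multiplicative.toAdd m'.left with hv'
  set A' := m'.right with hA'
  have hm : m = qd v A := qd_eta m
  have hm' : m' = qd v' A' := qd_eta m'
  have hinst : ∀ z : Fin 2 → ZMod p,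
      qd ((A : Matrix (Fin 2) (Fin 2) (ZMod p)).mulVec z) 1 ∈ Q →
      (A' : Matrix (Fin 2) (Fin 2) (ZMod p)).mulVec z
        = (A : Matrix (Fin 2) (Fin 2) (ZMod p)).mulVec z := by
    intro z hzQ
    have h1 : qd ((A : Matrix (Fin 2) (Fin 2) (ZMod p)).mulVec z) 1 * m = m * qd z 1 := by
      rw [hm, qd_mul, qd_mul, qd_eq_iff]
      refine ⟨?_, by rw [one_mul, mul_one]⟩
      rw [Matrix.SpecialLinearGroup.coe_one, Matrix.one_mulVec]
      exact add_comm _ _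
    have h2 := (hR _ hzQ (qd z 1) (V_mem_P z)).1 h1
    rw [hm', qd_mul, qd_mul, qd_eq_iff] at h2
    have h3 := h2.1
    rw [Matrix.SpecialLinearGroup.coe_one, Matrix.one_mulVec] at h3
    funext i
    have h4 := congrFun h3 i
    simp only [Pi.add_apply] at h4
    linear_combination -h4
  rcases classQ Q hQP hQcard with hQ | ⟨k, hk⟩
  · -- Q = V
    have hAz : ∀ x y : ZMod p,
        (A' : Matrix (Fin 2) (Fin 2) (ZMod p)).mulVec ![x, y]
          = (A : Matrix (Fin 2) (Fin 2) (ZMod p)).mulVec ![x, y] := by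
      intro x y
      exact hinst ![x, y] (by rw [hQ]; exact (memV_iff _).2 ⟨_, rfl⟩)
    have hAA' : A = A' := by
      apply Subtype.ext
      have h0 := hAz 1 0
      have h1 := hAz 0 1
      rw [mulVec_pair, mulVec_pair] at h0 h1
      funext i j
      fin_cases i <;> fin_cases j
      · have := congrFun h0 0; simpa using this.symm
      · have := congrFun h1 0; simpa using this.symm
      · have := congrFun h0 1; simpa using this.symm
      · have := congrFun h1 1; simpa using this.symm
    refine ⟨qd (v' - v) 1, by rw [hQ]; exact (memV_iff _).2 ⟨_, rfl⟩, 1, one_mem _, ?_⟩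
    rw [mul_one, hm, hm', qd_mul, qd_eq_iff, hAA']
    refine ⟨?_, by rw [one_mul]⟩
    rw [Matrix.SpecialLinearGroup.coe_one, Matrix.one_mulVec]
    funext i
    simp
  · -- Q = Q_k
    have hC1 : ∀ z : Fin 2 → ZMod p,
        ((A : Matrix (Fin 2) (Fin 2) (ZMod p)).mulVec z) 1 = 0 →
        (A' : Matrix (Fin 2) (Fin 2) (ZMod p)).mulVec z
          = (A : Matrix (Fin 2) (Fin 2) (ZMod p)).mulVec z := by
      intro z hz
      apply hinst z
      apply (hk _).2
      refine ⟨((A : Matrix (Fin 2) (Fin 2) (ZMod p)).mulVec z) 0, 0, ?_⟩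
      rw [qd_eq_iff, unip_zero]
      refine ⟨?_, rfl⟩
      funext i
      fin_cases i
      · simp
      · show ((A : Matrix (Fin 2) (Fin 2) (ZMod p)).mulVec z) 1 = k * 0
        rw [hz, mul_zero]
    set a0 := (A : Matrix (Fin 2) (Fin 2) (ZMod p)) 0 0 with ha0
    set a1 := (A : Matrix (Fin 2) (Fin 2) (ZMod p)) 0 1 with ha1
    set a2 := (A : Matrix (Fin 2) (Fin 2) (ZMod p)) 1 0 with ha2
    set a3 := (A : Matrix (Fin 2) (Fin 2) (ZMod p)) 1 1 with ha3
    set b0 := (A' : Matrix (Fin 2) (Fin 2) (ZMod p)) 0 0 with hb0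
    set b1 := (A' : Matrix (Fin 2) (Fin 2) (ZMod p)) 0 1 with hb1
    set b2 := (A' : Matrix (Fin 2) (Fin 2) (ZMod p)) 1 0 with hb2
    set b3 := (A' : Matrix (Fin 2) (Fin 2) (ZMod p)) 1 1 with hb3
    have hdet : a0 * a3 - a1 * a2 = 1 := det_fin_two_SL A
    have hdet' : b0 * b3 - b1 * b2 = 1 := det_fin_two_SL A'
    obtain ⟨s, h00, h01, h10, h11⟩ : ∃ s : ZMod p,
        b0 = a0 + s * a2 ∧ b1 = a1 + s * a3 ∧ b2 = a2 ∧ b3 = a3 := by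
      by_cases hc : a2 = 0
      · -- Borel case
        have hC := hC1 ![1, 0] (by rw [mulVec_pair]; simp [← ha2, ← ha3, hc])
        rw [mulVec_pair, mulVec_pair] at hC
        have e0 := congrFun hC 0
        have e1 := congrFun hC 1
        simp only [Matrix.cons_val_zero, Matrix.cons_val_one, Matrix.head_cons,
          mul_one, mul_zero, add_zero] at e0 e1
        have hd1 : a0 * a3 = 1 := by linear_combination hdet + a1 * hc
        have ha0ne : a0 ≠ 0 := left_ne_zero_of_mul_eq_one hd1
        have h3' : b3 = a3 := by
          apply mul_left_cancel₀ ha0ne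
          linear_combination hdet' + b1 * e1 + b1 * hc - b3 * e0 - hdet - a1 * hc
        exact ⟨(b1 - a1) * a0,
          by linear_combination e0 - ((b1 - a1) * a0) * hc,
          by linear_combination (a1 - b1) * hd1,
          by linear_combination e1, h3'⟩
      · -- non-Borel case
        have hC := hC1 ![a3, -a2] (by rw [mulVec_pair]; simp [← ha2, ← ha3]; ring)
        rw [mulVec_pair, mulVec_pair] at hC
        have e0 := congrFun hC 0
        have e1 := congrFun hC 1
        simp only [Matrix.cons_val_zero, Matrix.cons_val_one, Matrix.head_cons] at e0 e1
        have h2' : b2 = a2 := by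
          linear_combination (-b2) * e0 + (-b2) * hdet + b0 * e1 + a2 * hdet'
        have h3' : b3 = a3 := by
          apply mul_left_cancel₀ hc
          linear_combination (-1) * e1 + a3 * h2'
        have hs2 : ((b0 - a0) * a2⁻¹) * a2 = b0 - a0 := by field_simp
        refine ⟨(b0 - a0) * a2⁻¹, by linear_combination -hs2, ?_, h2', h3'⟩
        apply mul_left_cancel₀ hc
        linear_combination (-1) * e0 - a3 * hs2
    have hAeta : (A : Matrix (Fin 2) (Fin 2) (ZMod p)) = !![a0, a1; a2, a3] := by
      rw [ha0, ha1, ha2, ha3]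
      exact Matrix.eta_fin_two _
    have hA'eta : (A' : Matrix (Fin 2) (Fin 2) (ZMod p)) = !![b0, b1; b2, b3] := by
      rw [hb0, hb1, hb2, hb3]
      exact Matrix.eta_fin_two _
    have hsSL : A' = unip p s * A := by
      apply Subtype.ext
      rw [Matrix.SpecialLinearGroup.coe_mul, unip_coe, hAeta, hA'eta, Matrix.mul_fin_two]
      funext i j
      fin_cases i <;> fin_cases j
      · show b0 = 1 * a0 + s * a2
        linear_combination h00
      · show b1 = 1 * a1 + s * a3
        linear_combination h01
      · show b2 = 0 * a0 + 1 * a2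
        linear_combination h10
      · show b3 = 0 * a1 + 1 * a3
        linear_combination h11
    set β := v' 1 - v 1 - k * s with hβ
    set xx := v' 0 - v 0 - s * (v 1 + β) with hxx
    have hAz : (A : Matrix (Fin 2) (Fin 2) (ZMod p)).mulVec ![-a1 * β, a0 * β] = ![0, β] := by
      rw [mulVec_pair]
      funext i
      fin_cases i
      · show a0 * (-a1 * β) + a1 * (a0 * β) = 0
        ring
      · show a2 * (-a1 * β) + a3 * (a0 * β) = β
        linear_combination β * hdet
    refine ⟨qd ![xx, k * s] (unip p s), (hk _).2 ⟨xx, s, rfl⟩,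
      qd ![-a1 * β, a0 * β] 1, V_mem_P _, ?_⟩
    rw [hm, hm', qd_mul, qd_mul, qd_eq_iff]
    constructor
    · rw [Matrix.SpecialLinearGroup.coe_mul, ← Matrix.mulVec_mulVec, hAz, unip_coe,
        mulVec_unip, mulVec_unip]
      funext i
      fin_cases i
      · show v' 0 = (xx + (v 0 + s * v 1)) + (0 + s * β)
        rw [hxx]
        ring
      · show v' 1 = (k * s + v 1) + β
        rw [hβ]
        ring
    · rw [mul_one, hsSL]
  
end Aux4
/-- for an odd prime `p` and any subgroup `Q` of order `p²` of the
Sylow `p`-subgroup `P` of `Qd(p)`, the centralizer of `ι(Q)` in Park's group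
`G = Park(Qd(p), P)` is a `p`-group. -/
theorem statement13 (p : ℕ) [Fact p.Prime] (hodd : Odd p)
    (Q : Subgroup (Qd p)) (hQP : Q ≤ QdP p) (hQcard : Nat.card Q = p ^ 2) :
    IsPGroup p (Subgroup.centralizer
      ((Q.map (parkEmbed (Qd p) (QdP p)) : Subgroup ↥(parkGroup (Qd p) (QdP p))) :
        Set ↥(parkGroup (Qd p) (QdP p)))) := by
  set S : Set ↥(parkGroup (Qd p) (QdP p)) :=
    ((Q.map (parkEmbed (Qd p) (QdP p)) : Subgroup ↥(parkGroup (Qd p) (QdP p))) :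
      Set ↥(parkGroup (Qd p) (QdP p))) with hS
  -- one-sided commuting property
  have key : ∀ (w : ↥(parkGroup (Qd p) (QdP p))), w ∈ Subgroup.centralizer S →
      ∀ q ∈ Q, ∀ m : Qd p,
        (↑w : Equiv.Perm (Qd p)) (q * m) = q * (↑w : Equiv.Perm (Qd p)) m := by
    intro w hw q hq m
    have hmem : parkEmbed (Qd p) (QdP p) q ∈ S := by
      rw [hS]
      exact ⟨q, hq, rfl⟩
    have h1 := Subgroup.mem_centralizer_iff.1 hw _ hmem
    have h2 := congrArg (fun t : ↥(parkGroup (Qd p) (QdP p)) =>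
      (↑t : Equiv.Perm (Qd p)) m) h1
    simp only [Subgroup.coe_mul, Equiv.Perm.mul_apply] at h2
    have h3 : ∀ n : Qd p, (↑(parkEmbed (Qd p) (QdP p) q) : Equiv.Perm (Qd p)) n = q * n :=
      fun n => rfl
    rw [h3, h3] at h2
    exact h2.symm
  intro x
  refine ⟨2, ?_⟩
  set y := (x : ↥(parkGroup (Qd p) (QdP p))) with hy
  have hyC : y ∈ Subgroup.centralizer S := x.2
  have hpark : ∀ (m u : Qd p), u ∈ QdP p →
      (↑y : Equiv.Perm (Qd p)) (m * u) = (↑y : Equiv.Perm (Qd p)) m * u := y.2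
  have hpark' : ∀ (m u : Qd p), u ∈ QdP p →
      (↑(y⁻¹) : Equiv.Perm (Qd p)) (m * u) = (↑(y⁻¹) : Equiv.Perm (Qd p)) m * u := (y⁻¹).2
  have hinv : (↑(y⁻¹) : Equiv.Perm (Qd p)) = (↑y : Equiv.Perm (Qd p))⁻¹ := rfl
  have hy2 : y ^ (p ^ 2) = 1 := by
    apply Subtype.ext
    rw [SubgroupClass.coe_pow, OneMemClass.coe_one]
    apply Equiv.ext
    intro m
    -- the R relation for m and y m
    have hR : ∀ q ∈ Q, ∀ u ∈ QdP p,
        (q * m = m * u ↔ q * ((↑y : Equiv.Perm (Qd p)) m)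
          = ((↑y : Equiv.Perm (Qd p)) m) * u) := by
      intro q hq u hu
      constructor
      · intro h
        have := congrArg (↑y : Equiv.Perm (Qd p)) h
        rwa [key y hyC q hq m, hpark m u hu] at this
      · intro h
        have := congrArg (↑(y⁻¹) : Equiv.Perm (Qd p)) h
        rwa [key (y⁻¹) (inv_mem hyC) q hq _, hpark' _ u hu, hinv,
          Equiv.Perm.coe_inv, Equiv.symm_apply_apply] at this
    obtain ⟨q, hq, u, hu, hqu⟩ := lemL Q hQP hQcard m ((↑y : Equiv.Perm (Qd p)) m) hR
    have hiter : ∀ n : ℕ, ((↑y : Equiv.Perm (Qd p)) ^ n) m = q ^ n * m * u ^ n := by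
      intro n
      induction n with
      | zero => simp
      | succ n ih =>
          rw [pow_succ', Equiv.Perm.mul_apply, ih, mul_assoc,
            key y hyC (q ^ n) (pow_mem hq n), hpark _ _ (Subgroup.pow_mem _ hu n), hqu,
            pow_succ, pow_succ']
          simp only [mul_assoc]
    have hq1 : q ^ (p ^ 2) = 1 := by
      rw [pow_two]
      exact expP q (hQP hq)
    have hu1 : u ^ (p ^ 2) = 1 := by
      rw [pow_two]
      exact expP u hu
    show ((↑y : Equiv.Perm (Qd p)) ^ (p ^ 2)) m = m
    rw [hiter (p ^ 2), hq1, hu1, one_mul, mul_one]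
  apply Subtype.ext
  rw [SubgroupClass.coe_pow, OneMemClass.coe_one, ← hy]
  exact hy2
end
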